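/- arXiv:2310.04265 — 6 statements merged into one kernel-verified Lean document; each statement's English description precedes it below -/
import Mathlib

section
/- For every tournament T and every total order ≺ on V(T), the following two inequalities hold: χ⃗(T) ≤ χ(T^≺) and χ(T^≺) ≤ ω(T^≺) · χ⃗(T). -/
structure Dig (V : Type*) where
  Adj : V → V → Prop
  irrefl : ∀ v, ¬ Adj v v
  asymm : ∀ u v, Adj u v → ¬ Adj v u

structure Tournament (V : Type*) extends Dig V where
  total : ∀ u v, u ≠ v → Adj u v ∨ Adj v u

variable {V : Type*}

/-- The backedge graph of a digraph with respect to a (strict total) order `r`: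
`u` and `v` are adjacent iff the arc between them goes backwards with respect to `r`. -/
def Dig.backedge (D : Dig V) (r : V → V → Prop) : SimpleGraph V where
  Adj u v := (r u v ∧ D.Adj v u) ∨ (r v u ∧ D.Adj u v)
  symm := ⟨by intro u v h; tauto⟩
  loopless := ⟨by intro v h; rcases h with ⟨_, h⟩ | ⟨_, h⟩ <;> exact D.irrefl v h⟩

/-- The clique number of an undirected graph. -/
noncomputable def gOmega (G : SimpleGraph V) : ℕ :=
  sSup {n | ∃ s : Finset V, G.IsNClique n s}

/-- The chromatic number of an undirected graph (as a natural number). -/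
noncomputable def gChi (G : SimpleGraph V) : ℕ :=
  sInf {n | G.Colorable n}

/-- The sub-digraph induced on `S` is acyclic: there is no directed cycle inside `S`. -/
def Dig.AcyclicOn (D : Dig V) (S : Set V) : Prop :=
  ∀ v, ¬ Relation.TransGen (fun x y => x ∈ S ∧ y ∈ S ∧ D.Adj x y) v v

/-- The dichromatic number: the least `n` such that the vertices can be partitioned into
`n` acyclic parts. -/
noncomputable def Dig.dichi (D : Dig V) : ℕ :=
  sInf {n | ∃ c : V → Fin n, ∀ i, D.AcyclicOn {v | c v = i}}

/-- The clique number of a digraph: the minimum over all strict total orders of the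
clique number of the associated backedge graph. -/
noncomputable def Dig.cliqueNum (D : Dig V) : ℕ :=
  sInf {m | ∃ r : V → V → Prop, IsStrictTotalOrder V r ∧ gOmega (D.backedge r) = m}

/-- For every tournament `T` and every total order `r` on its vertices,
`χ⃗(T) ≤ χ(T^r)` and `χ(T^r) ≤ ω(T^r) · χ⃗(T)`. -/
theorem stmt_2 (V : Type) [Fintype V] (T : Tournament V) (r : V → V → Prop)
    (hr : IsStrictTotalOrder V r) :
    T.toDig.dichi ≤ gChi (T.toDig.backedge r) ∧
      gChi (T.toDig.backedge r) ≤ gOmega (T.toDig.backedge r) * T.toDig.dichi := by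
  classical
  set G := T.toDig.backedge r with hG
  -- basic facts about r
  have rirr : ∀ v, ¬ r v v := fun v => hr.irrefl v
  have rtrans : ∀ {a b c}, r a b → r b c → r a c := fun h1 h2 => hr.trans _ _ _ h1 h2
  have rtri : ∀ a b, r a b ∨ a = b ∨ r b a := fun a b => by
    by_contra hc; push_neg at hc; exact hc.2.1 (hr.trichotomous a b hc.1 hc.2.2)
  have rasymm : ∀ {a b}, r a b → ¬ r b a := fun hab hba => rirr _ (rtrans hab hba)
  -- ω is an upper bound for clique sizes
  have hbdd : BddAbove {n | ∃ s : Finset V, G.IsNClique n s} := by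
    refine ⟨Fintype.card V, fun n hn => ?_⟩
    obtain ⟨s, hs⟩ := hn
    rw [← hs.2]
    exact le_trans (Finset.card_le_card (Finset.subset_univ s)) (le_of_eq Finset.card_univ)
  have hclique_le : ∀ {n} {s : Finset V}, G.IsNClique n s → n ≤ gOmega G :=
    fun hs => le_csSup hbdd ⟨_, hs⟩
  constructor
  · -- dichi ≤ gChi
    have hne : gChi G ∈ {n | G.Colorable n} :=
      Nat.sInf_mem ⟨Fintype.card V, G.colorable_of_fintype⟩
    obtain ⟨C⟩ := hne
    apply Nat.sInf_le
    refine ⟨C, fun i v hv => ?_⟩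
    have step : ∀ x y, (x ∈ {v | C v = i} ∧ y ∈ {v | C v = i} ∧ T.toDig.Adj x y) → r x y := by
      rintro x y ⟨hx, hy, hxy⟩
      have hxne : x ≠ y := fun h => T.toDig.irrefl x (h ▸ hxy)
      rcases rtri x y with h | h | h
      · exact h
      · exact absurd h hxne
      · exact absurd (C.valid (Or.inr ⟨h, hxy⟩)) (by simp [hx.trans hy.symm])
    have htr : Transitive r := fun a b c hab hbc => rtrans hab hbc
    have := Relation.TransGen.mono step _ _ hv
    rw [show Relation.TransGen r = r by
      haveI : IsTrans V r := ⟨fun a b c hab hbc => htr hab hbc⟩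
      exact Relation.transGen_eq_self] at this
    exact rirr v this
  · -- gChi ≤ ω * dichi
    set k := T.toDig.dichi with hk
    -- the defining set of dichi is nonempty (use an injective coloring)
    have hkne : (Fintype.card V) ∈ {n | ∃ c : V → Fin n, ∀ i, T.toDig.AcyclicOn {v | c v = i}} := by
      refine ⟨Fintype.equivFin V, fun i v hv => ?_⟩
      have hRfalse : ∀ x y : V, ¬ (x ∈ {v : V | Fintype.equivFin V v = i} ∧
          y ∈ {v : V | Fintype.equivFin V v = i} ∧ T.toDig.Adj x y) := by
        rintro x y ⟨hx, hy, hxy⟩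
        have : x = y := (Fintype.equivFin V).injective (hx.trans hy.symm)
        exact T.toDig.irrefl x (this ▸ hxy)
      cases hv with
      | single h => exact hRfalse _ _ h
      | tail _ h => exact hRfalse _ _ h
    -- obtain an optimal dichromatic coloring
    obtain ⟨c, hc⟩ : ∃ c : V → Fin k, ∀ i, T.toDig.AcyclicOn {v | c v = i} :=
      Nat.sInf_mem ⟨_, hkne⟩
    -- transitivity inside each color class
    have htrans : ∀ x y z : V, c x = c y → c y = c z → T.toDig.Adj x y → T.toDig.Adj y z →
        T.toDig.Adj x z := by
      intro x y z hxy hyz haxy hayz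
      by_contra hne
      have hxz : x ≠ z := by
        rintro rfl
        exact T.toDig.asymm _ _ haxy hayz
      have haz : T.toDig.Adj z x := (T.total x z hxz).resolve_left hne
      have hxS : x ∈ {v : V | c v = c x} := rfl
      have hyS : y ∈ {v : V | c v = c x} := hxy.symm
      have hzS : z ∈ {v : V | c v = c x} := (hyz.symm.trans hxy.symm)
      exact hc (c x) x
        ((Relation.TransGen.single ⟨hxS, hyS, haxy⟩).tail
          ⟨hyS, hzS, hayz⟩ |>.tail ⟨hzS, hxS, haz⟩)
    -- the height function
    set h : V → ℕ := fun v => sSup {n | ∃ s : Finset V, G.IsNClique n s ∧ v ∈ s ∧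
      (∀ u ∈ s, c u = c v) ∧ ∀ u ∈ s, u ≠ v → r u v} with hh
    have hsetbdd : ∀ v, BddAbove {n | ∃ s : Finset V, G.IsNClique n s ∧ v ∈ s ∧
        (∀ u ∈ s, c u = c v) ∧ ∀ u ∈ s, u ≠ v → r u v} := by
      intro v
      refine ⟨Fintype.card V, fun n hn => ?_⟩
      obtain ⟨s, hs, -⟩ := hn
      rw [← hs.2]
      exact le_trans (Finset.card_le_card (Finset.subset_univ s)) (le_of_eq Finset.card_univ)
    have hsetne : ∀ v, (1 : ℕ) ∈ {n | ∃ s : Finset V, G.IsNClique n s ∧ v ∈ s ∧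
        (∀ u ∈ s, c u = c v) ∧ ∀ u ∈ s, u ≠ v → r u v} := by
      intro v
      refine ⟨{v}, ⟨?_, by simp⟩, by simp, by simp, by simp⟩
      intro a ha b hb hab
      simp only [Finset.coe_singleton, Set.mem_singleton_iff] at ha hb
      exact absurd (ha.trans hb.symm) hab
    have h1 : ∀ v, 1 ≤ h v := fun v => le_csSup (hsetbdd v) (hsetne v)
    have hle : ∀ v, h v ≤ gOmega G := by
      intro v
      have := Nat.sSup_mem ⟨1, hsetne v⟩ (hsetbdd v)
      obtain ⟨s, hs, -⟩ := this
      exact hclique_le hs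
    -- key: h strictly increases along backedges within a color class
    have hkey : ∀ u v, c u = c v → G.Adj u v → r u v → h u < h v := by
      intro u v hcuv hadj huv
      have huvne : u ≠ v := G.ne_of_adj hadj
      -- the backedge from u to v: T.Adj v u
      have havu : T.toDig.Adj v u := by
        rcases hadj with ⟨-, h'⟩ | ⟨h', -⟩
        · exact h'
        · exact absurd huv (rasymm h')
      have hmem := Nat.sSup_mem ⟨1, hsetne u⟩ (hsetbdd u)
      obtain ⟨s, hs, hus, hcs, hmax⟩ := hmem
      have hvns : v ∉ s := by
        intro hv
        exact rasymm huv (hmax v hv huvne.symm)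
      -- every w ∈ s is backedge-adjacent to v and r w v
      have hwv : ∀ w ∈ s, w ≠ v → G.Adj w v ∧ r w v := by
        intro w hw hwvne
        rcases eq_or_ne w u with rfl | hwu
        · exact ⟨hadj, huv⟩
        · have hrwu : r w u := hmax w hw hwu
          have hadjwu : G.Adj w u := hs.1 hw hus hwu
          have hawu : T.toDig.Adj u w := by
            rcases hadjwu with ⟨-, h'⟩ | ⟨h', -⟩
            · exact h'
            · exact absurd hrwu (rasymm h')
          have havw : T.toDig.Adj v w := htrans v u w hcuv.symm (hcs w hw).symm havu hawu
          have hrwv : r w v := rtrans hrwu huv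
          exact ⟨Or.inl ⟨hrwv, havw⟩, hrwv⟩
      have hclique : G.IsNClique (h u + 1) (insert v s) := by
        constructor
        · intro a ha b hb hab
          simp only [Finset.coe_insert, Set.mem_insert_iff, Finset.mem_coe] at ha hb
          rcases ha with rfl | ha
          · rcases hb with rfl | hb
            · exact absurd rfl hab
            · exact ((hwv b hb hab.symm).1).symm
          · rcases hb with rfl | hb
            · exact (hwv a ha hab).1
            · exact hs.1 ha hb hab
        · rw [Finset.card_insert_of_notMem hvns, hs.2]
      have : h u + 1 ≤ h v := by
        refine le_csSup (hsetbdd v) ⟨insert v s, hclique, Finset.mem_insert_self _ _, ?_, ?_⟩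
        · intro w hw
          rcases Finset.mem_insert.mp hw with rfl | hw
          · rfl
          · exact (hcs w hw).trans hcuv
        · intro w hw hwv'
          rcases Finset.mem_insert.mp hw with rfl | hw
          · exact absurd rfl hwv'
          · exact (hwv w hw hwv').2
      omega
    -- build the coloring with ω * k colors
    set om := gOmega G with hom
    have hcol : G.Colorable (om * k) := by
      have C : G.Coloring (Fin om × Fin k) := by
        refine SimpleGraph.Coloring.mk
          (fun v => (⟨h v - 1, ?_⟩, c v)) ?_
        · have := h1 v; have := hle v; omega
        · intro u v hadj hne
          have huvne : u ≠ v := G.ne_of_adj hadj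
          have hceq : c u = c v := congrArg Prod.snd hne
          have hheq : h u - 1 = h v - 1 := by
            have := congrArg Prod.fst hne
            exact congrArg Fin.val this
          rcases rtri u v with huv | heq | hvu
          · have := hkey u v hceq hadj huv
            have := h1 u
            omega
          · exact huvne heq
          · have := hkey v u hceq.symm hadj.symm hvu
            have := h1 v
            omega
      have := C.colorable
      simpa using this
    calc gChi G ≤ om * k := Nat.sInf_le hcol
end

section
/- For every tournament T and every ω⃗-ordering ≺ of T, one has χ⃗(T) ≤ χ(T^≺) ≤ χ⃗(T)². -/
variable {V : Type*}

section Aux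

variable {V : Type} [Fintype V]

lemma cliqueSet_bddAbove (G : SimpleGraph V) :
    BddAbove {n | ∃ s : Finset V, G.IsNClique n s} := by
  refine ⟨Fintype.card V, ?_⟩
  rintro n ⟨s, hs⟩
  rw [← hs.card_eq, ← Finset.card_univ]
  exact Finset.card_le_card (Finset.subset_univ s)

lemma le_gOmega (G : SimpleGraph V) {n : ℕ} {s : Finset V} (hs : G.IsNClique n s) :
    n ≤ sSup {n | ∃ s : Finset V, G.IsNClique n s} :=
  le_csSup (cliqueSet_bddAbove G) ⟨s, hs⟩

lemma no_transgen {α : Type*} {p : α → α → Prop} (h : ∀ x y, ¬ p x y) (a b : α) :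
    ¬ Relation.TransGen p a b := by
  intro hv
  induction hv with
  | single h' => exact h _ _ h'
  | tail _ h' _ => exact h _ _ h'

noncomputable def hgt (e : V → V → Prop) (v : V) : ℕ :=
  sSup {n | ∃ g : Fin (n + 1) → V,
    (∀ i j : Fin (n + 1), i < j → e (g i) (g j)) ∧ g (Fin.last n) = v}

variable {e : V → V → Prop}

lemma chain_inj (hirr : ∀ x, ¬ e x x) {n : ℕ} {g : Fin (n + 1) → V}
    (hg : ∀ i j : Fin (n + 1), i < j → e (g i) (g j)) : Function.Injective g := by
  intro i j hij
  by_contra hne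
  rcases lt_or_gt_of_ne hne with h | h
  · exact hirr (g i) (hij ▸ hg i j h)
  · exact hirr (g j) (hij ▸ hg j i h)

lemma hgt_set_nonempty (e : V → V → Prop) (v : V) :
    {n | ∃ g : Fin (n + 1) → V,
      (∀ i j : Fin (n + 1), i < j → e (g i) (g j)) ∧ g (Fin.last n) = v}.Nonempty := by
  refine ⟨0, fun _ => v, ?_, rfl⟩
  intro i j hij
  exact absurd (Fin.lt_def.mp hij) (by omega)

lemma hgt_set_bdd (hirr : ∀ x, ¬ e x x) (v : V) :
    BddAbove {n | ∃ g : Fin (n + 1) → V,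
      (∀ i j : Fin (n + 1), i < j → e (g i) (g j)) ∧ g (Fin.last n) = v} := by
  refine ⟨Fintype.card V, ?_⟩
  rintro n ⟨g, hg, -⟩
  have := Fintype.card_le_of_injective g (chain_inj hirr hg)
  rw [Fintype.card_fin] at this
  omega

lemma hgt_mem (hirr : ∀ x, ¬ e x x) (v : V) :
    ∃ g : Fin (hgt e v + 1) → V,
      (∀ i j, i < j → e (g i) (g j)) ∧ g (Fin.last (hgt e v)) = v :=
  Nat.sSup_mem (hgt_set_nonempty e v) (hgt_set_bdd hirr v)

lemma chain_extend (htr : ∀ x y z, e x y → e y z → e x z) {n : ℕ} {u v : V}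
    (g : Fin (n + 1) → V) (hg : ∀ i j : Fin (n + 1), i < j → e (g i) (g j))
    (hlast : g (Fin.last n) = u) (huv : e u v) :
    ∃ g' : Fin (n + 2) → V,
      (∀ i j : Fin (n + 2), i < j → e (g' i) (g' j)) ∧ g' (Fin.last (n + 1)) = v := by
  refine ⟨fun i => if h : (i : ℕ) < n + 1 then g ⟨i, h⟩ else v, ?_, ?_⟩
  · intro i j hij
    have hij' : (i : ℕ) < (j : ℕ) := hij
    by_cases hjlt : (j : ℕ) < n + 1
    · have hilt : (i : ℕ) < n + 1 := lt_trans hij' hjlt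
      simp only [dif_pos hilt, dif_pos hjlt]
      exact hg ⟨i, hilt⟩ ⟨j, hjlt⟩ hij'
    · have hilt : (i : ℕ) < n + 1 := by omega
      simp only [dif_pos hilt, dif_neg hjlt]
      rcases Nat.lt_or_ge (i : ℕ) n with h | h
      · have h2 : e (g ⟨i, hilt⟩) (g (Fin.last n)) := hg _ _ (by simpa [Fin.lt_def])
        exact htr _ _ _ (hlast ▸ h2) huv
      · have h3 : (⟨(i : ℕ), hilt⟩ : Fin (n + 1)) = Fin.last n := by
          ext; simp [Fin.last]; omega
        rw [h3, hlast]; exact huv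
  · simp only [Fin.val_last]
    rw [dif_neg (lt_irrefl _)]

lemma hgt_lt (hirr : ∀ x, ¬ e x x) (htr : ∀ x y z, e x y → e y z → e x z)
    {u v : V} (huv : e u v) : hgt e u < hgt e v := by
  obtain ⟨g, hg, hlast⟩ := hgt_mem hirr u
  obtain ⟨g', hg', hlast'⟩ := chain_extend htr g hg hlast huv
  have hmem : hgt e u + 1 ∈ {n | ∃ g : Fin (n + 1) → V,
      (∀ i j : Fin (n + 1), i < j → e (g i) (g j)) ∧ g (Fin.last n) = v} :=
    ⟨g', hg', hlast'⟩
  exact le_csSup (hgt_set_bdd hirr v) hmem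

lemma hgt_lt_omega (hirr : ∀ x, ¬ e x x) {G : SimpleGraph V}
    (he : ∀ x y, e x y → G.Adj x y) (v : V) :
    hgt e v < sSup {n | ∃ s : Finset V, G.IsNClique n s} := by
  classical
  obtain ⟨g, hg, -⟩ := hgt_mem hirr v
  have hinj := chain_inj hirr hg
  have hclq : G.IsNClique (hgt e v + 1) (Finset.image g Finset.univ) := by
    constructor
    · intro x hx y hy hxy
      simp only [Finset.coe_image, Set.mem_image] at hx hy
      obtain ⟨i, -, rfl⟩ := hx
      obtain ⟨j, -, rfl⟩ := hy
      rcases lt_or_gt_of_ne (fun h : i = j => hxy (by rw [h])) with h | h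
      · exact he _ _ (hg i j h)
      · exact (he _ _ (hg j i h)).symm
    · rw [Finset.card_image_of_injective _ hinj, Finset.card_univ, Fintype.card_fin]
  exact le_gOmega G hclq

end Aux

section Tour

variable {V : Type} [Fintype V] (T : Tournament V)

omit [Fintype V] in
lemma adj_trans_of_acyclic {S : Set V} (hS : T.toDig.AcyclicOn S) {x y z : V}
    (hx : x ∈ S) (hy : y ∈ S) (hz : z ∈ S)
    (hxy : T.Adj x y) (hyz : T.Adj y z) : T.Adj x z := by
  have hxz : x ≠ z := by
    rintro rfl
    exact hS x (Relation.TransGen.tail (Relation.TransGen.single ⟨hx, hy, hxy⟩) ⟨hy, hx, hyz⟩)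
  rcases T.total x z hxz with h | h
  · exact h
  · exfalso
    exact hS x (Relation.TransGen.tail
      (Relation.TransGen.tail (Relation.TransGen.single ⟨hx, hy, hxy⟩) ⟨hy, hz, hyz⟩) ⟨hz, hx, h⟩)

lemma dichi_set_nonempty :
    {n | ∃ c : V → Fin n, ∀ i, T.toDig.AcyclicOn {v | c v = i}}.Nonempty := by
  refine ⟨Fintype.card V, Fintype.equivFin V, fun i v => no_transgen ?_ v v⟩
  rintro x y ⟨hx, hy, hxy⟩
  have : x = y := (Fintype.equivFin V).injective (hx.trans hy.symm)
  exact T.irrefl x (this ▸ hxy)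

lemma dichi_spec : ∃ c : V → Fin T.toDig.dichi, ∀ i, T.toDig.AcyclicOn {v | c v = i} :=
  Nat.sInf_mem (dichi_set_nonempty T)

lemma cliqueNum_le_dichi : T.toDig.cliqueNum ≤ T.toDig.dichi := by
  obtain ⟨d, hd⟩ := dichi_spec T
  set r' : V → V → Prop := fun x y => d x < d y ∨ (d x = d y ∧ T.Adj x y) with hr'
  have htri : ∀ a b : V, r' a b ∨ a = b ∨ r' b a := by
    intro a b
    by_cases hab : a = b
    · exact Or.inr (Or.inl hab)
    rcases lt_trichotomy (d a) (d b) with h | h | h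
    · exact Or.inl (Or.inl h)
    · rcases T.total a b hab with h2 | h2
      · exact Or.inl (Or.inr ⟨h, h2⟩)
      · exact Or.inr (Or.inr (Or.inr ⟨h.symm, h2⟩))
    · exact Or.inr (Or.inr (Or.inl h))
  have hirr' : ∀ a : V, ¬ r' a a := by
    intro a h
    rcases h with h | ⟨-, h⟩
    · exact lt_irrefl _ h
    · exact T.irrefl a h
  have htrans : ∀ a b c : V, r' a b → r' b c → r' a c := by
    intro a b c hab hbc
    rcases hab with hab | ⟨hab, hab2⟩ <;> rcases hbc with hbc | ⟨hbc, hbc2⟩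
    · exact Or.inl (lt_trans hab hbc)
    · exact Or.inl (hbc ▸ hab)
    · exact Or.inl (hab ▸ hbc)
    · refine Or.inr ⟨hab.trans hbc, ?_⟩
      exact adj_trans_of_acyclic T (hd (d a)) rfl hab.symm (hab.trans hbc).symm hab2 hbc2
  have hsto : IsStrictTotalOrder V r' :=
    { trichotomous := fun a b h1 h2 => ((htri a b).resolve_left h1).resolve_right h2
      irrefl := hirr'
      trans := htrans }
  refine le_trans (Nat.sInf_le ⟨r', hsto, rfl⟩) ?_
  refine csSup_le ⟨0, ⟨∅, SimpleGraph.isNClique_empty.mpr rfl⟩⟩ ?_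
  rintro n ⟨s, hs⟩
  have hinj : Set.InjOn d s := by
    intro x hx y hy hxy
    by_contra hne
    have hadj := hs.1 hx hy hne
    rcases hadj with ⟨h1, h2⟩ | ⟨h1, h2⟩ <;>
      rcases h1 with h1 | ⟨-, h1⟩
    · exact absurd hxy (ne_of_lt h1)
    · exact T.asymm _ _ h1 h2
    · exact absurd hxy.symm (ne_of_lt h1)
    · exact T.asymm _ _ h1 h2
  have := Finset.card_le_card_of_injOn d (fun x _ => Finset.mem_univ (d x)) hinj
  rw [hs.card_eq, Finset.card_univ, Fintype.card_fin] at this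
  exact this

end Tour

/-- For every tournament `T` and every ω⃗-ordering `r` of `T`,
`χ⃗(T) ≤ χ(T^r) ≤ χ⃗(T)²`. -/
theorem stmt_3 (V : Type) [Fintype V] (T : Tournament V) (r : V → V → Prop)
    (hr : IsStrictTotalOrder V r)
    (hopt : gOmega (T.toDig.backedge r) = T.toDig.cliqueNum) :
    T.toDig.dichi ≤ gChi (T.toDig.backedge r) ∧
      gChi (T.toDig.backedge r) ≤ T.toDig.dichi ^ 2 := by
  set G := T.toDig.backedge r with hG
  set k := T.toDig.dichi with hk
  constructor
  · -- dichi ≤ gChi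
    have hne : {n | G.Colorable n}.Nonempty := ⟨Fintype.card V, G.colorable_of_fintype⟩
    have hcol : G.Colorable (gChi G) := Nat.sInf_mem hne
    obtain ⟨C⟩ := hcol
    refine Nat.sInf_le ⟨C, fun i v hv => ?_⟩
    have hsub : ∀ x y : V, (x ∈ {v | C v = i} ∧ y ∈ {v | C v = i} ∧ T.Adj x y) → r x y := by
      rintro x y ⟨hx, hy, hxy⟩
      have hne : x ≠ y := fun h => T.irrefl x (h ▸ hxy)
      rcases (or_iff_not_imp_left.2 fun h1 => or_iff_not_imp_right.2 fun h2 => hr.trichotomous x y h1 h2) with h | h | h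
      · exact h
      · exact absurd h hne
      · exact absurd ((Set.mem_setOf_eq ▸ hx).trans (Set.mem_setOf_eq ▸ hy).symm)
          (C.valid (Or.inr ⟨h, hxy⟩))
    have h2 : Relation.TransGen r v v := Relation.TransGen.mono hsub _ _ hv
    have htrans : Transitive r := by intro a b c h1 h2; exact hr.trans a b c h1 h2
    rw [@Relation.transGen_eq_self _ r ⟨htrans⟩] at h2
    exact hr.irrefl v h2
  · -- gChi ≤ k^2
    obtain ⟨d, hd⟩ := dichi_spec T
    set ω := gOmega G with hω
    have hωk : ω ≤ k := hopt ▸ cliqueNum_le_dichi T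
    set e : V → V → Prop := fun x y => d x = d y ∧ r x y ∧ T.Adj y x with he
    have hirr : ∀ x, ¬ e x x := fun x h => hr.irrefl x h.2.1
    have htr : ∀ x y z, e x y → e y z → e x z := by
      rintro x y z ⟨hdxy, hrxy, hayx⟩ ⟨hdyz, hryz, hazy⟩
      have hrxz := hr.trans _ _ _ hrxy hryz
      have hne : z ≠ x := fun h => hr.irrefl x (h ▸ hrxz)
      refine ⟨hdxy.trans hdyz, hrxz, ?_⟩
      rcases T.total z x hne with h | h
      · exact h
      · exfalso
        have hyS : y ∈ {v | d v = d x} := hdxy.symm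
        have hzS : z ∈ {v | d v = d x} := (hdxy.trans hdyz).symm
        exact hd (d x) x (Relation.TransGen.tail
          (Relation.TransGen.tail (Relation.TransGen.single ⟨rfl, hzS, h⟩)
            ⟨hzS, hyS, hazy⟩) ⟨hyS, rfl, hayx⟩)
    have hadj : ∀ x y, e x y → G.Adj x y := fun x y h => Or.inl ⟨h.2.1, h.2.2⟩
    have hlt : ∀ v, hgt e v < ω := fun v => hgt_lt_omega hirr hadj v
    have hcol : G.Colorable (k * ω) := by
      refine ⟨SimpleGraph.Coloring.mk
        (fun v => finProdFinEquiv (d v, ⟨hgt e v, hlt v⟩)) ?_⟩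
      intro u v huv hcv
      have h1 : d u = d v ∧ hgt e u = hgt e v := by
        have := finProdFinEquiv.injective hcv
        exact ⟨congrArg Prod.fst this, congrArg Fin.val (congrArg Prod.snd this)⟩
      rcases huv with ⟨h2, h3⟩ | ⟨h2, h3⟩
      · exact absurd h1.2 (ne_of_lt (hgt_lt hirr htr ⟨h1.1, h2, h3⟩))
      · exact absurd h1.2.symm (ne_of_lt (hgt_lt hirr htr ⟨h1.1.symm, h2, h3⟩))
    calc gChi G ≤ k * ω := Nat.sInf_le hcol
    _ ≤ k ^ 2 := by rw [pow_two]; exact Nat.mul_le_mul_left k hωk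
end

section
/- Let 𝒯 be a class of tournaments (closed under induced subtournaments). The following are equivalent: (i) 𝒯 is χ⃗-bounded; (ii) the class 𝒯^≺ = { T^≺ : T ∈ 𝒯, ≺ a total order on V(T) } of all backedge graphs of members of 𝒯 is χ-bounded; (iii) the class 𝒯^≺_ω⃗ = { T^≺ : T ∈ 𝒯, ≺ an ω⃗-ordering of T } is χ-bounded. -/
variable {V : Type*}

/-- The induced subtournament obtained by pulling back along an injection. -/
def Tournament.pull {V W : Type*} (T : Tournament V) (f : W ↪ V) : Tournament W where
  Adj a b := T.Adj (f a) (f b)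
  irrefl a := T.irrefl (f a)
  asymm a b := T.asymm (f a) (f b)
  total a b h := T.total (f a) (f b) (fun e => h (f.injective e))

section Aux

lemma omega_ge {V : Type*} [Fintype V] {G : SimpleGraph V} {m : ℕ} {s : Finset V}
    (h : G.IsNClique m s) : m ≤ gOmega G := by
  apply le_csSup
  · refine ⟨Fintype.card V, ?_⟩
    rintro x ⟨t, ht⟩
    rw [← ht.card_eq]
    exact Finset.card_le_univ t
  · exact ⟨s, h⟩

/-- Any proper colouring of a backedge graph yields an acyclic partition. -/
lemma dichi_le_chi {n : ℕ} (T : Tournament (Fin n)) (r : Fin n → Fin n → Prop)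
    (hr : IsStrictTotalOrder (Fin n) r) :
    T.toDig.dichi ≤ gChi (T.toDig.backedge r) := by
  haveI := hr
  set G := T.toDig.backedge r with hG
  have hne : {m | G.Colorable m}.Nonempty :=
    ⟨Fintype.card (Fin n), G.colorable_of_fintype⟩
  have hmem : G.Colorable (gChi G) := Nat.sInf_mem hne
  obtain ⟨C⟩ := hmem
  apply Nat.sInf_le
  refine ⟨C, fun i v hv => ?_⟩
  have hstep : ∀ x y : Fin n,
      (x ∈ {w | C w = i} ∧ y ∈ {w | C w = i} ∧ T.toDig.Adj x y) → r x y := by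
    rintro x y ⟨hx, hy, hxy⟩
    rcases trichotomous_of r x y with h | h | h
    · exact h
    · exact absurd (h ▸ hxy) (T.irrefl y)
    · exact absurd (hy.trans hx.symm : C y = C x)
        (C.valid (Or.inl ⟨h, hxy⟩ : G.Adj y x))
  have := Relation.TransGen.mono hstep v v hv
  have htr : Transitive r := fun _ _ _ hab hbc => trans_of r hab hbc
  rw [Relation.transGen_eq_self] at this
  exact irrefl_of r v this

/-- An acyclic partition into `m` parts gives a proper colouring of any backedge graph
with `m * ω` colours. -/
lemma backedge_colorable {n : ℕ} (T : Tournament (Fin n)) (r : Fin n → Fin n → Prop)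
    (hr : IsStrictTotalOrder (Fin n) r) {m : ℕ} (c : Fin n → Fin m)
    (hc : ∀ i, T.toDig.AcyclicOn {v | c v = i}) :
    (T.toDig.backedge r).Colorable (m * gOmega (T.toDig.backedge r)) := by
  classical
  haveI := hr
  rcases Nat.eq_zero_or_pos n with hn | hn
  · subst hn
    exact ⟨SimpleGraph.Coloring.mk (fun v => v.elim0) (fun {u} _ _ => u.elim0)⟩
  set D := T.toDig with hD
  set G := D.backedge r with hG
  set k := gOmega G with hk
  set q : Fin n → Fin n → Prop := fun u v => c u = c v ∧ r u v ∧ D.Adj v u with hq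
  have qirrefl : ∀ v, ¬ q v v := fun v hv => irrefl_of r v hv.2.1
  have qtrans : ∀ {u v w}, q u v → q v w → q u w := by
    rintro u v w ⟨h1, h2, h3⟩ ⟨h4, h5, h6⟩
    refine ⟨h1.trans h4, trans_of r h2 h5, ?_⟩
    have huw : u ≠ w := fun e => absurd (e ▸ trans_of r h2 h5) (irrefl_of r w)
    rcases T.total w u (Ne.symm huw) with h | h
    · exact h
    · exfalso
      apply hc (c u) u
      have m1 : u ∈ {x | c x = c u} := rfl
      have m2 : v ∈ {x | c x = c u} := h1.symm
      have m3 : w ∈ {x | c x = c u} := (h1.trans h4).symm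
      exact Relation.TransGen.tail
        (Relation.TransGen.tail (.single ⟨m1, m3, h⟩) ⟨m3, m2, h6⟩) ⟨m2, m1, h3⟩
  -- chains of q with top v
  set P : Fin n → Finset (Fin n) → Prop := fun v s =>
    v ∈ s ∧ (∀ u ∈ s, u = v ∨ q u v) ∧
      (∀ u ∈ s, ∀ w ∈ s, u ≠ w → q u w ∨ q w u) with hP
  set h : Fin n → ℕ := fun v => (Finset.univ.filter (fun s => P v s)).sup Finset.card
    with hh
  have hclique : ∀ v s, P v s → G.IsNClique s.card s := by
    intro v s hPs
    refine ⟨?_, rfl⟩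
    intro u hu w hw hne
    rcases hPs.2.2 u hu w hw hne with hq' | hq'
    · exact Or.inl ⟨hq'.2.1, hq'.2.2⟩
    · exact Or.inr ⟨hq'.2.1, hq'.2.2⟩
  have hle : ∀ v, h v ≤ k := by
    intro v
    apply Finset.sup_le
    intro s hs
    rw [Finset.mem_filter] at hs
    exact omega_ge (hclique v s hs.2)
  have hsingle : ∀ v, P v {v} := by
    intro v
    refine ⟨Finset.mem_singleton_self v, ?_, ?_⟩
    · intro u hu; exact Or.inl (Finset.mem_singleton.mp hu)
    · intro u hu w hw hne
      exact absurd ((Finset.mem_singleton.mp hu).trans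
        (Finset.mem_singleton.mp hw).symm) hne
  have hpos : ∀ v, 1 ≤ h v := by
    intro v
    have : ({v} : Finset (Fin n)) ∈ Finset.univ.filter (fun s => P v s) := by
      rw [Finset.mem_filter]; exact ⟨Finset.mem_univ _, hsingle v⟩
    have h1 : ({v} : Finset (Fin n)).card ≤ h v := Finset.le_sup (f := Finset.card) this
    simpa using h1
  have hlt : ∀ u v, q u v → h u < h v := by
    intro u v huv
    obtain ⟨s, hs, hcard⟩ := Finset.exists_mem_eq_sup
      (Finset.univ.filter (fun s => P u s))
      ⟨{u}, by rw [Finset.mem_filter]; exact ⟨Finset.mem_univ _, hsingle u⟩⟩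
      Finset.card
    rw [Finset.mem_filter] at hs
    have hPs := hs.2
    have hvs : v ∉ s := by
      intro hv
      rcases hPs.2.1 v hv with hvu | hvu
      · exact qirrefl u (hvu ▸ huv)
      · exact qirrefl v (qtrans hvu huv)
    have htop : ∀ x ∈ s, q x v := by
      intro x hx
      rcases hPs.2.1 x hx with hx' | hx'
      · exact hx' ▸ huv
      · exact qtrans hx' huv
    have hP' : P v (insert v s) := by
      refine ⟨Finset.mem_insert_self _ _, ?_, ?_⟩
      · intro x hx
        rcases Finset.mem_insert.mp hx with hx | hx
        · exact Or.inl hx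
        · exact Or.inr (htop x hx)
      · intro x hx w hw hne
        rcases Finset.mem_insert.mp hx with hx | hx <;>
          rcases Finset.mem_insert.mp hw with hw | hw
        · exact absurd (hx.trans hw.symm) hne
        · exact Or.inr (by rw [hx]; exact htop w hw)
        · exact Or.inl (by rw [hw]; exact htop x hx)
        · exact hPs.2.2 x hx w hw hne
    have hmem' : insert v s ∈ Finset.univ.filter (fun s => P v s) := by
      rw [Finset.mem_filter]; exact ⟨Finset.mem_univ _, hP'⟩
    have hins : (insert v s).card ≤ h v := Finset.le_sup (f := Finset.card) hmem'
    rw [Finset.card_insert_of_notMem hvs] at hins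
    have hhu : h u = s.card := hcard
    omega
  have hbound : ∀ v, h v - 1 < k := by
    intro v
    have := hle v
    have := hpos v
    omega
  have C : G.Coloring (Fin m × Fin k) := by
    refine SimpleGraph.Coloring.mk (fun v => (c v, ⟨h v - 1, hbound v⟩)) ?_
    intro u v hadj heq
    have hcuv : c u = c v := (Prod.ext_iff.mp heq).1
    have hhuv : h u = h v := by
      have heq2 : h u - 1 = h v - 1 := congrArg Fin.val (Prod.ext_iff.mp heq).2
      have h1 := hpos u
      have h2 := hpos v
      omega
    rcases hadj with ⟨h1, h2⟩ | ⟨h1, h2⟩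
    · exact absurd hhuv (Nat.ne_of_lt (hlt u v ⟨hcuv, h1, h2⟩))
    · exact absurd hhuv (Nat.ne_of_gt (hlt v u ⟨hcuv.symm, h1, h2⟩))
  have := C.colorable
  simpa using this

lemma dichi_mem {n : ℕ} (T : Tournament (Fin n)) :
    ∃ c : Fin n → Fin T.toDig.dichi, ∀ i, T.toDig.AcyclicOn {v | c v = i} := by
  have hne : {m | ∃ c : Fin n → Fin m, ∀ i, T.toDig.AcyclicOn {v | c v = i}}.Nonempty := by
    refine ⟨n, id, fun i v hv => ?_⟩
    have hstep : ∀ x y : Fin n, ¬ (x ∈ {w | id w = i} ∧ y ∈ {w | id w = i}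
        ∧ T.toDig.Adj x y) := by
      rintro x y ⟨hx, hy, hxy⟩
      have : x = y := hx.trans hy.symm
      exact T.irrefl y (this ▸ hxy)
    cases hv with
    | single h' => exact hstep _ _ h'
    | tail _ h' => exact hstep _ _ h'
  exact Nat.sInf_mem hne

lemma cliqueNum_mem {n : ℕ} (T : Tournament (Fin n)) :
    ∃ r, IsStrictTotalOrder (Fin n) r ∧
      gOmega (T.toDig.backedge r) = T.toDig.cliqueNum := by
  have hne : {m | ∃ r : Fin n → Fin n → Prop, IsStrictTotalOrder (Fin n) r ∧
      gOmega (T.toDig.backedge r) = m}.Nonempty :=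
    ⟨gOmega (T.toDig.backedge (· < ·)), (· < ·), inferInstance, rfl⟩
  exact Nat.sInf_mem hne

lemma cliqueNum_le {n : ℕ} (T : Tournament (Fin n)) (r : Fin n → Fin n → Prop)
    (hr : IsStrictTotalOrder (Fin n) r) :
    T.toDig.cliqueNum ≤ gOmega (T.toDig.backedge r) :=
  Nat.sInf_le ⟨r, hr, rfl⟩

end Aux

/-- For a class `𝒯` of tournaments closed under induced subtournaments, the following are
equivalent: (i) `𝒯` is χ⃗-bounded; (ii) the class of all backedge graphs of members of `𝒯`
is χ-bounded; (iii) the class of backedge graphs coming from ω⃗-orderings is χ-bounded. -/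
theorem stmt_4 (𝒯 : ∀ n : ℕ, Tournament (Fin n) → Prop)
    (hclosed : ∀ n m (T : Tournament (Fin n)), 𝒯 n T → ∀ f : Fin m ↪ Fin n, 𝒯 m (T.pull f)) :
    ((∃ f : ℕ → ℕ, ∀ n (T : Tournament (Fin n)), 𝒯 n T →
        T.toDig.dichi ≤ f T.toDig.cliqueNum) ↔
      (∃ f : ℕ → ℕ, ∀ n (T : Tournament (Fin n)), 𝒯 n T →
        ∀ r : Fin n → Fin n → Prop, IsStrictTotalOrder (Fin n) r →
          gChi (T.toDig.backedge r) ≤ f (gOmega (T.toDig.backedge r)))) ∧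
    ((∃ f : ℕ → ℕ, ∀ n (T : Tournament (Fin n)), 𝒯 n T →
        ∀ r : Fin n → Fin n → Prop, IsStrictTotalOrder (Fin n) r →
          gChi (T.toDig.backedge r) ≤ f (gOmega (T.toDig.backedge r))) ↔
      (∃ f : ℕ → ℕ, ∀ n (T : Tournament (Fin n)), 𝒯 n T →
        ∀ r : Fin n → Fin n → Prop, IsStrictTotalOrder (Fin n) r →
          gOmega (T.toDig.backedge r) = T.toDig.cliqueNum →
            gChi (T.toDig.backedge r) ≤ f (gOmega (T.toDig.backedge r)))) := by
  -- A → B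
  have hAB : (∃ f : ℕ → ℕ, ∀ n (T : Tournament (Fin n)), 𝒯 n T →
        T.toDig.dichi ≤ f T.toDig.cliqueNum) →
      (∃ f : ℕ → ℕ, ∀ n (T : Tournament (Fin n)), 𝒯 n T →
        ∀ r : Fin n → Fin n → Prop, IsStrictTotalOrder (Fin n) r →
          gChi (T.toDig.backedge r) ≤ f (gOmega (T.toDig.backedge r))) := by
    rintro ⟨f, hf⟩
    refine ⟨fun k => ((Finset.range (k + 1)).sup f) * k, ?_⟩
    intro n T hT r hr
    set G := T.toDig.backedge r with hG
    set k := gOmega G with hk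
    obtain ⟨c, hc⟩ := dichi_mem T
    have hcol : G.Colorable (T.toDig.dichi * k) := backedge_colorable T r hr c hc
    have h1 : gChi G ≤ T.toDig.dichi * k := Nat.sInf_le hcol
    have h2 : T.toDig.dichi ≤ f T.toDig.cliqueNum := hf n T hT
    have h3 : T.toDig.cliqueNum ≤ k := cliqueNum_le T r hr
    have h4 : f T.toDig.cliqueNum ≤ (Finset.range (k + 1)).sup f :=
      Finset.le_sup (Finset.mem_range.mpr (Nat.lt_succ_of_le h3))
    calc gChi G ≤ T.toDig.dichi * k := h1
      _ ≤ ((Finset.range (k + 1)).sup f) * k :=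
          Nat.mul_le_mul_right k (h2.trans h4)
  -- B → C
  have hBC : (∃ f : ℕ → ℕ, ∀ n (T : Tournament (Fin n)), 𝒯 n T →
        ∀ r : Fin n → Fin n → Prop, IsStrictTotalOrder (Fin n) r →
          gChi (T.toDig.backedge r) ≤ f (gOmega (T.toDig.backedge r))) →
      (∃ f : ℕ → ℕ, ∀ n (T : Tournament (Fin n)), 𝒯 n T →
        ∀ r : Fin n → Fin n → Prop, IsStrictTotalOrder (Fin n) r →
          gOmega (T.toDig.backedge r) = T.toDig.cliqueNum →
            gChi (T.toDig.backedge r) ≤ f (gOmega (T.toDig.backedge r))) := by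
    rintro ⟨f, hf⟩
    exact ⟨f, fun n T hT r hr _ => hf n T hT r hr⟩
  -- C → A
  have hCA : (∃ f : ℕ → ℕ, ∀ n (T : Tournament (Fin n)), 𝒯 n T →
        ∀ r : Fin n → Fin n → Prop, IsStrictTotalOrder (Fin n) r →
          gOmega (T.toDig.backedge r) = T.toDig.cliqueNum →
            gChi (T.toDig.backedge r) ≤ f (gOmega (T.toDig.backedge r))) →
      (∃ f : ℕ → ℕ, ∀ n (T : Tournament (Fin n)), 𝒯 n T →
        T.toDig.dichi ≤ f T.toDig.cliqueNum) := by
    rintro ⟨f, hf⟩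
    refine ⟨f, fun n T hT => ?_⟩
    obtain ⟨r, hr, hrw⟩ := cliqueNum_mem T
    calc T.toDig.dichi ≤ gChi (T.toDig.backedge r) := dichi_le_chi T r hr
      _ ≤ f (gOmega (T.toDig.backedge r)) := hf n T hT r hr hrw
      _ = f T.toDig.cliqueNum := by rw [hrw]
  exact ⟨⟨hAB, fun hB => hCA (hBC hB)⟩, ⟨hBC, fun hC => hAB (hCA hC)⟩⟩
end

section
/- For every integer n ≥ 1, the tournament S̃_n satisfies ω⃗(S̃_n) ≥ n. -/
variable {V : Type*}

/-- Vertex set of the tournament `S̃ n` : `S̃ 1` has one vertex and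
`S̃ (n+1)` consists of three copies of `S̃ n`. -/
def StV : ℕ → Type
  | 0 => PUnit
  | 1 => PUnit
  | n + 2 => Fin 3 × StV (n + 1)

/-- The arc relation of `S̃ n`: inside a copy, use the relation of `S̃ (n-1)`;
between copies, all arcs go from copy `i` to copy `i+1 (mod 3)`. -/
def StAdj : (n : ℕ) → StV n → StV n → Prop
  | 0, _, _ => False
  | 1, _, _ => False
  | n + 2, p, q => (p.1 = q.1 ∧ StAdj (n + 1) p.2 q.2) ∨ q.1 = p.1 + 1

lemma fin3_ne_add_one : ∀ i : Fin 3, ¬ i = i + 1 := by decide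
lemma fin3_asymm : ∀ i j : Fin 3, j = i + 1 → i = j + 1 → False := by decide
lemma fin3_total : ∀ i j : Fin 3, i ≠ j → j = i + 1 ∨ i = j + 1 := by decide

lemma StAdj_irrefl : ∀ (n : ℕ) (v : StV n), ¬ StAdj n v v
  | 0, _, h => h
  | 1, _, h => h
  | n + 2, v, h => by
    rcases h with ⟨-, h⟩ | h
    · exact StAdj_irrefl (n + 1) v.2 h
    · exact fin3_ne_add_one v.1 h

lemma StAdj_asymm : ∀ (n : ℕ) (u v : StV n), StAdj n u v → StAdj n v u → False
  | 0, _, _, h, _ => h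
  | 1, _, _, h, _ => h
  | n + 2, u, v, h, h' => by
    rcases h with ⟨hij, h⟩ | h <;> rcases h' with ⟨hji, h'⟩ | h'
    · exact StAdj_asymm (n + 1) u.2 v.2 h h'
    · rw [hij] at h'; exact fin3_ne_add_one v.1 h'
    · rw [hji] at h; exact fin3_ne_add_one u.1 h
    · exact fin3_asymm u.1 v.1 h h'

lemma StAdj_total : ∀ (n : ℕ) (u v : StV n), u ≠ v → StAdj n u v ∨ StAdj n v u
  | 0, PUnit.unit, PUnit.unit, h => absurd rfl h
  | 1, PUnit.unit, PUnit.unit, h => absurd rfl h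
  | n + 2, u, v, h => by
    by_cases hij : u.1 = v.1
    · have hxy : u.2 ≠ v.2 := by
        intro e
        exact h (Prod.ext_iff.mpr ⟨hij, e⟩)
      rcases StAdj_total (n + 1) u.2 v.2 hxy with h' | h'
      · exact Or.inl (Or.inl ⟨hij, h'⟩)
      · exact Or.inr (Or.inl ⟨hij.symm, h'⟩)
    · rcases fin3_total u.1 v.1 hij with h' | h'
      · exact Or.inl (Or.inr h')
      · exact Or.inr (Or.inr h')

/-- The tournament `S̃ n`: `S̃ 1 = TT₁` and `S̃ (n+1) = Δ(S̃ n, S̃ n, S̃ n)`. -/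
def Stilde (n : ℕ) : Tournament (StV n) where
  Adj := StAdj n
  irrefl := StAdj_irrefl n
  asymm := fun u v h h' => StAdj_asymm n u v h h'
  total := StAdj_total n

noncomputable def StVFintype : (n : ℕ) → Fintype (StV n)
  | 0 => inferInstanceAs (Fintype PUnit)
  | 1 => inferInstanceAs (Fintype PUnit)
  | n + 2 => @instFintypeProd _ _ _ (StVFintype (n + 1))

def stvPt : (n : ℕ) → StV n
  | 0 => PUnit.unit
  | 1 => PUnit.unit
  | n + 2 => (0, stvPt (n + 1))

lemma fin3_ne_add_two : ∀ i : Fin 3, i + 2 ≠ i := by decide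
lemma fin3_eq_add_two_add_one : ∀ i : Fin 3, i = (i + 2) + 1 := by decide

/-- Every nonempty finite set has a minimum for a strict total order. -/
lemma exists_min_rel {α : Type*} (r : α → α → Prop) (ht : IsStrictTotalOrder α r)
    (s : Finset α) (hs : s.Nonempty) : ∃ v ∈ s, ∀ u ∈ s, u ≠ v → r v u := by
  classical
  haveI := ht
  induction s using Finset.induction_on with
  | empty => exact absurd hs (by simp)
  | @insert a t ha ih =>
    rcases t.eq_empty_or_nonempty with rfl | htn
    · exact ⟨a, Finset.mem_insert_self a _, by
        intro u hu hne
        rcases Finset.mem_insert.mp hu with rfl | h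
        · exact absurd rfl hne
        · exact absurd h (Finset.notMem_empty u)⟩
    · obtain ⟨v, hvt, hv⟩ := ih htn
      rcases trichotomous_of r a v with h | rfl | h
      · refine ⟨a, Finset.mem_insert_self a _, ?_⟩
        intro u hu hne
        rcases Finset.mem_insert.mp hu with rfl | hut
        · exact absurd rfl hne
        · by_cases huv : u = v
          · exact huv ▸ h
          · exact trans_of r h (hv u hut huv)
      · exact absurd hvt ha
      · refine ⟨v, Finset.mem_insert_of_mem hvt, ?_⟩
        intro u hu hne
        rcases Finset.mem_insert.mp hu with rfl | hut
        · exact h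
        · exact hv u hut hne

lemma backedge_adj {V : Type*} (D : Dig V) (r : V → V → Prop) (u v : V) :
    (D.backedge r).Adj u v ↔ (r u v ∧ D.Adj v u) ∨ (r v u ∧ D.Adj u v) := Iff.rfl

/-- Key lemma: for every strict total order on `S̃ (n+1)` there is a backedge clique
of size `n+1`. -/
lemma key_clique : ∀ (n : ℕ) (r : StV (n + 1) → StV (n + 1) → Prop),
    IsStrictTotalOrder (StV (n + 1)) r →
    ∃ s : Finset (StV (n + 1)), ((Stilde (n + 1)).toDig.backedge r).IsNClique (n + 1) s := by
  intro n
  induction n with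
  | zero =>
    intro r hr
    refine ⟨{PUnit.unit}, ?_⟩
    rw [SimpleGraph.isNClique_iff]
    constructor
    · intro a ha b hb hab
      haveI : Subsingleton (StV 1) := inferInstanceAs (Subsingleton PUnit)
      exact absurd (Subsingleton.elim a b) hab
    · exact Finset.card_singleton _
  | succ m ih =>
    intro r hr
    classical
    haveI := hr
    haveI : Fintype (StV (m + 2)) := StVFintype _
    have huniv : (Finset.univ : Finset (StV (m + 2))).Nonempty := ⟨stvPt _, Finset.mem_univ _⟩
    obtain ⟨v, -, hv⟩ := exists_min_rel r hr Finset.univ huniv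
    -- `StV (m+2)` is definitionally `Fin 3 × StV (m+1)`
    have v' : Fin 3 × StV (m + 1) := v
    set i : Fin 3 := (v : Fin 3 × StV (m + 1)).1 with hi
    set k : Fin 3 := i + 2 with hk
    set f : StV (m + 1) → StV (m + 2) := fun x => ((k, x) : Fin 3 × StV (m + 1)) with hf
    have hfinj : Function.Injective f := fun x y h => congrArg Prod.snd h
    have hfne : ∀ x, f x ≠ v := by
      intro x h
      have : k = i := congrArg (fun p : Fin 3 × StV (m + 1) => p.1) h
      exact fin3_ne_add_two i this
    set r' : StV (m + 1) → StV (m + 1) → Prop := fun x y => r (f x) (f y) with hr'def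
    have hr' : IsStrictTotalOrder (StV (m + 1)) r' := by
      haveI : IsIrrefl (StV (m + 1)) r' := ⟨fun x h => irrefl_of r (f x) h⟩
      haveI : IsTrans (StV (m + 1)) r' := ⟨fun x y z h h' => trans_of r h h'⟩
      haveI : IsTrichotomous (StV (m + 1)) r' := ⟨by
        intro x y h1 h2
        rcases trichotomous_of r (f x) (f y) with h | h | h
        · exact absurd h h1
        · exact hfinj h
        · exact absurd h h2⟩
      haveI : IsStrictOrder (StV (m + 1)) r' := ⟨⟩
      exact ⟨⟩
    obtain ⟨s', hs'⟩ := ih r' hr'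
    refine ⟨insert v (s'.image f), ?_⟩
    rw [SimpleGraph.isNClique_iff]
    constructor
    · intro a ha b hb hab
      rcases Finset.mem_insert.mp ha with rfl | ha' <;>
        rcases Finset.mem_insert.mp hb with hb | hb'
      · exact absurd hb.symm hab
      · -- a = v, b = f y
        obtain ⟨y, -, rfl⟩ := Finset.mem_image.mp hb'
        rw [backedge_adj]
        refine Or.inl ⟨hv (f y) (Finset.mem_univ _) (hfne y), ?_⟩
        show StAdj (m + 2) (f y) a
        exact Or.inr (fin3_eq_add_two_add_one i)
      · -- a = f x, b = v
        obtain ⟨x, -, rfl⟩ := Finset.mem_image.mp ha'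
        subst hb
        rw [backedge_adj]
        refine Or.inr ⟨hv (f x) (Finset.mem_univ _) (hfne x), ?_⟩
        show StAdj (m + 2) (f x) b
        exact Or.inr (fin3_eq_add_two_add_one i)
      · obtain ⟨x, hx, rfl⟩ := Finset.mem_image.mp ha'
        obtain ⟨y, hy, rfl⟩ := Finset.mem_image.mp hb'
        have hxy : x ≠ y := fun h => hab (congrArg f h)
        have := hs'.1 hx hy hxy
        rw [backedge_adj] at this ⊢
        rcases this with ⟨h1, h2⟩ | ⟨h1, h2⟩
        · exact Or.inl ⟨h1, Or.inl ⟨rfl, h2⟩⟩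
        · exact Or.inr ⟨h1, Or.inl ⟨rfl, h2⟩⟩
    · rw [Finset.card_insert_of_notMem, Finset.card_image_of_injective _ hfinj, hs'.2]
      intro hmem
      obtain ⟨x, -, hx⟩ := Finset.mem_image.mp hmem
      exact hfne x hx

/-- For every `n ≥ 1`, `ω⃗(S̃ n) ≥ n`. -/
theorem stmt_6 (n : ℕ) (hn : 1 ≤ n) : n ≤ (Stilde n).toDig.cliqueNum := by
  obtain ⟨m, rfl⟩ : ∃ m, n = m + 1 := ⟨n - 1, (Nat.succ_pred_eq_of_pos hn).symm⟩
  haveI : Fintype (StV (m + 1)) := StVFintype _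
  unfold Dig.cliqueNum
  apply le_csInf
  · -- the set of achievable values is nonempty: some strict total order exists
    classical
    set e := (Fintype.equivFin (StV (m + 1)))
    refine ⟨_, fun x y => e x < e y, ?_, rfl⟩
    haveI : IsIrrefl (StV (m + 1)) (fun x y => e x < e y) := ⟨fun x => lt_irrefl _⟩
    haveI : IsTrans (StV (m + 1)) (fun x y => e x < e y) := ⟨fun _ _ _ h h' => lt_trans h h'⟩
    haveI : IsTrichotomous (StV (m + 1)) (fun x y => e x < e y) := ⟨by
      intro x y h1 h2
      rcases lt_trichotomy (e x) (e y) with h | h | h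
      · exact absurd h h1
      · exact e.injective h
      · exact absurd h h2⟩
    haveI : IsStrictOrder (StV (m + 1)) (fun x y => e x < e y) := ⟨⟩
    exact ⟨⟩
  · rintro b ⟨r, hr, rfl⟩
    obtain ⟨s, hs⟩ := key_clique m r hr
    unfold gOmega
    apply le_csSup
    · refine ⟨Fintype.card (StV (m + 1)), ?_⟩
      rintro c ⟨t, ht⟩
      rw [← ht.2]
      exact Finset.card_le_univ t
    · exact ⟨s, hs⟩
end

section
/- Let 𝒯 be a class of digraphs and K an integer such that for every D ∈ 𝒯 the underlying undirected graph of D has chromatic number at most K. Then the closure 𝒯^subst of 𝒯 under substitution is χ⃗-bounded by the function g(w) = (3K)^w; that is, every digraph D ∈ 𝒯^subst satisfies χ⃗(D) ≤ (3K)^{ω⃗(D)}. -/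
variable {V : Type*}

/-- The underlying undirected graph of a digraph. -/
def Dig.underlying (D : Dig V) : SimpleGraph V where
  Adj u v := D.Adj u v ∨ D.Adj v u
  symm := ⟨by intro u v h; tauto⟩
  loopless := ⟨by intro v h; rcases h with h | h <;> exact D.irrefl v h⟩

/-- The digraph obtained by substituting the digraph `D₂` for the vertex `u` of `D₁`. -/
def Dig.subst {V₁ V₂ : Type*} (D₁ : Dig V₁) (u : V₁) (D₂ : Dig V₂) :
    Dig ({v : V₁ // v ≠ u} ⊕ V₂) where
  Adj x y := D₁.Adj (Sum.elim Subtype.val (fun _ => u) x) (Sum.elim Subtype.val (fun _ => u) y)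
      ∨ (∃ a b, x = Sum.inr a ∧ y = Sum.inr b ∧ D₂.Adj a b)
  irrefl := by
    rintro x (h | ⟨a, b, ha, hb, h⟩)
    · exact D₁.irrefl _ h
    · rw [ha] at hb
      obtain rfl := Sum.inr_injective hb
      exact D₂.irrefl a h
  asymm := by
    rintro x y (h | ⟨a, b, ha, hb, h⟩) (h' | ⟨a', b', ha', hb', h'⟩)
    · exact D₁.asymm _ _ h h'
    · subst ha'; subst hb'
      simp only [Sum.elim_inr] at h
      exact D₁.irrefl u h
    · subst ha; subst hb
      simp only [Sum.elim_inr] at h'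
      exact D₁.irrefl u h'
    · subst ha; subst hb
      obtain rfl := Sum.inr_injective ha'
      obtain rfl := Sum.inr_injective hb'
      exact D₂.asymm _ _ h h'

/-- The closure of a class of digraphs under substitution. -/
inductive SubstClosureD (𝒯 : ∀ V : Type, Dig V → Prop) : ∀ V : Type, Dig V → Prop
  | base (V : Type) (D : Dig V) : 𝒯 V D → SubstClosureD 𝒯 V D
  | step (V₁ V₂ : Type) (D₁ : Dig V₁) (u : V₁) (D₂ : Dig V₂) :
      SubstClosureD 𝒯 V₁ D₁ → SubstClosureD 𝒯 V₂ D₂ →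
      SubstClosureD 𝒯 _ (D₁.subst u D₂)

section Aux

open Classical in
/-- helper facts about AcyclicOn -/
theorem Dig.AcyclicOn.mono {V : Type} {D : Dig V} {S T : Set V} (hST : S ⊆ T)
    (hT : D.AcyclicOn T) : D.AcyclicOn S := by
  intro v hv
  exact hT v (Relation.TransGen.mono (fun x y ⟨hx, hy, ha⟩ => ⟨hST hx, hST hy, ha⟩) _ _ hv)

theorem Dig.acyclicOn_subsingleton {V : Type} (D : Dig V) {S : Set V}
    (h : ∀ a ∈ S, ∀ b ∈ S, a = b) : D.AcyclicOn S := by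
  have key : ∀ a b : V, (fun x y => x ∈ S ∧ y ∈ S ∧ D.Adj x y) a b → False := by
    rintro a b ⟨ha, hb, hab⟩
    exact D.irrefl a (h a ha b hb ▸ hab)
  have key2 : ∀ a b : V, Relation.TransGen (fun x y => x ∈ S ∧ y ∈ S ∧ D.Adj x y) a b → False := by
    intro a b hab
    induction hab with
    | single h' => exact key _ _ h'
    | tail _ h' _ => exact key _ _ h'
  exact fun v hv => key2 v v hv

theorem Dig.acyclicOn_empty {V : Type} (D : Dig V) : D.AcyclicOn (∅ : Set V) :=
  D.acyclicOn_subsingleton (by simp)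

variable {V : Type} (D : Dig V)

/-- Backedge pair relative to an injective rational valuation. -/
def bePair (ρ : V → ℚ) (u v : V) : Prop :=
  (ρ u < ρ v ∧ D.Adj v u) ∨ (ρ v < ρ u ∧ D.Adj u v)

theorem bePair_comm {ρ : V → ℚ} {u v : V} : bePair D ρ u v ↔ bePair D ρ v u := by
  unfold bePair; tauto

/-- All backedge-cliques inside `S` have size at most `w`. -/
def CliqueBound (w : ℕ) (ρ : V → ℚ) (S : Finset V) : Prop :=
  ∀ t : Finset V, t ⊆ S → (∀ u ∈ t, ∀ v ∈ t, u ≠ v → bePair D ρ u v) → t.card ≤ w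

theorem CliqueBound.anti {w : ℕ} {ρ : V → ℚ} {S T : Finset V} (hTS : T ⊆ S)
    (h : CliqueBound D w ρ S) : CliqueBound D w ρ T :=
  fun t ht hcl => h t (ht.trans hTS) hcl

theorem CliqueBound.card_le {ρ : V → ℚ} {S : Finset V}
    (h : CliqueBound D 0 ρ S) : S = ∅ := by
  by_contra hne
  obtain ⟨v, hv⟩ := Finset.nonempty_iff_ne_empty.2 hne
  have := h {v} (Finset.singleton_subset_iff.2 hv) (by intro a ha b hb hab; simp_all)
  simp at this

end Aux
section LemmaP

open Classical

variable {V W : Type} [Fintype V] (D : Dig V)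

/-- The key acyclicity lemma: if a class `C` induces an acyclic digraph inside each fiber of `π`,
and whenever two fibers meeting `C` are joined by an arc inside `C` all `C`-elements of the tail
fiber are `ρ`-below all `C`-elements of the head fiber, then `C` is acyclic. -/
theorem lemmaP (π : V → W) (ρ : V → ℚ) (C : Set V)
    (hfib : ∀ x : W, D.AcyclicOn {v | v ∈ C ∧ π v = x})
    (hcross : ∀ u ∈ C, ∀ v ∈ C, π u ≠ π v → D.Adj u v →
        ∀ u' ∈ C, π u' = π u → ∀ v' ∈ C, π v' = π v → ρ u' < ρ v') :
    D.AcyclicOn C := by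
  classical
  set fs : V → Finset V := fun v => Finset.univ.filter (fun u => u ∈ C ∧ π u = π v) with hfs
  have hmem : ∀ v ∈ C, v ∈ fs v := by
    intro v hv; simp [hfs, hv]
  have hne : ∀ v ∈ C, ((fs v).image ρ).Nonempty :=
    fun v hv => ⟨ρ v, Finset.mem_image_of_mem ρ (hmem v hv)⟩
  set h : V → ℚ := fun v => if hv : v ∈ C then ((fs v).image ρ).min' (hne v hv) else 0 with hh
  have hsame : ∀ a b : V, a ∈ C → b ∈ C → π a = π b → h a = h b := by
    intro a b ha hb hab
    have hfseq : fs a = fs b := by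
      ext u; simp [hfs, hab]
    simp only [hh, dif_pos ha, dif_pos hb]
    congr 1
    rw [hfseq]
  have hlt : ∀ a b : V, a ∈ C → b ∈ C → π a ≠ π b → D.Adj a b → h a < h b := by
    intro a b ha hb hne' hadj
    have h1 : h a ∈ (fs a).image ρ := by
      simp only [hh, dif_pos ha]; exact Finset.min'_mem _ _
    have h2 : h b ∈ (fs b).image ρ := by
      simp only [hh, dif_pos hb]; exact Finset.min'_mem _ _
    obtain ⟨a₀, ha₀, ha₀'⟩ := Finset.mem_image.1 h1
    obtain ⟨b₀, hb₀, hb₀'⟩ := Finset.mem_image.1 h2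
    simp only [hfs, Finset.mem_filter] at ha₀ hb₀
    rw [← ha₀', ← hb₀']
    exact hcross a ha b hb hne' hadj a₀ ha₀.2.1 ha₀.2.2 b₀ hb₀.2.1 hb₀.2.2
  have claim : ∀ a b : V, Relation.TransGen (fun x y => x ∈ C ∧ y ∈ C ∧ D.Adj x y) a b →
      a ∈ C ∧ b ∈ C ∧ (h a < h b ∨ (π a = π b ∧
        Relation.TransGen (fun p q => (p ∈ C ∧ π p = π a) ∧ (q ∈ C ∧ π q = π a) ∧ D.Adj p q) a b)) := by
    intro a b htg
    induction htg with
    | @single c h1 =>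
      obtain ⟨ha, hc, hadj⟩ := h1
      refine ⟨ha, hc, ?_⟩
      by_cases hpi : π a = π c
      · exact Or.inr ⟨hpi, Relation.TransGen.single ⟨⟨ha, rfl⟩, ⟨hc, hpi.symm⟩, hadj⟩⟩
      · exact Or.inl (hlt _ _ ha hc hpi hadj)
    | @tail b c hab h1 ih =>
      obtain ⟨hb, hc, hadj⟩ := h1
      obtain ⟨haC, _, ih'⟩ := ih
      refine ⟨haC, hc, ?_⟩
      rcases ih' with hlt1 | ⟨heq, htg1⟩
      · by_cases hpi : π b = π c
        · exact Or.inl (lt_of_lt_of_le hlt1 (le_of_eq (hsame _ _ hb hc hpi)))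
        · exact Or.inl (lt_trans hlt1 (hlt _ _ hb hc hpi hadj))
      · by_cases hpi : π b = π c
        · exact Or.inr ⟨heq.trans hpi,
            htg1.tail ⟨⟨hb, heq.symm⟩, ⟨hc, (heq.trans hpi).symm⟩, hadj⟩⟩
        · refine Or.inl ?_
          have h2 := hlt _ _ hb hc hpi hadj
          have h3 := hsame _ _ haC hb heq
          linarith
  intro v hv
  obtain ⟨hvC, _, hcase⟩ := claim v v hv
  rcases hcase with hc | ⟨_, hc⟩
  · exact lt_irrefl _ hc
  · exact hfib (π v) v (Relation.TransGen.mono (fun p q hpq => by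
      exact ⟨⟨hpq.1.1, hpq.1.2⟩, ⟨hpq.2.1.1, hpq.2.1.2⟩, hpq.2.2⟩) _ _ hc)

end LemmaP
section Squeeze

open Classical

variable {V : Type} [Fintype V]

theorem squeeze (g : V → ℚ) (hg : Function.Injective g) (T : Finset V) {a b : ℚ} (hab : a < b) :
    ∃ f : V → ℚ, Function.Injective f ∧ (∀ v, v ∉ T → f v = g v) ∧
      (∀ v ∈ T, a < f v ∧ f v < b) ∧ (∀ u ∈ T, ∀ v ∈ T, g u < g v → f u < f v) := by
  classical
  set killers : Finset ℚ := ((Finset.univ \ T).image g).filter (fun q => a < q) with hkill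
  set m : ℚ := (insert b killers).min' (Finset.insert_nonempty _ _) with hm
  have hma : a < m := by
    rw [hm, Finset.lt_min'_iff]
    intro y hy
    rcases Finset.mem_insert.1 hy with rfl | hy
    · exact hab
    · exact (Finset.mem_filter.1 hy).2
  have hmb : m ≤ b := Finset.min'_le _ _ (Finset.mem_insert_self _ _)
  set c : ℚ := (a + m) / 2 with hc
  have hac : a < c := by rw [hc]; linarith
  have hcm : c < m := by rw [hc]; linarith
  have hcb : c < b := lt_of_lt_of_le hcm hmb
  have hfree : ∀ v, v ∉ T → a < g v → c < g v := by
    intro v hv hgv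
    have : g v ∈ killers := by
      rw [hkill, Finset.mem_filter]
      exact ⟨Finset.mem_image_of_mem g (Finset.mem_sdiff.2 ⟨Finset.mem_univ v, hv⟩), hgv⟩
    calc c < m := hcm
      _ ≤ g v := Finset.min'_le _ _ (Finset.mem_insert_of_mem this)
  set rk : V → ℕ := fun v => (T.filter (fun u => g u < g v)).card with hrk
  have hrk_lt : ∀ v ∈ T, rk v < T.card := by
    intro v hv
    have : T.filter (fun u => g u < g v) ⊆ T.erase v := by
      intro u hu
      rw [Finset.mem_erase]
      refine ⟨fun h => ?_, (Finset.mem_filter.1 hu).1⟩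
      subst h
      exact lt_irrefl _ (Finset.mem_filter.1 hu).2
    calc rk v ≤ (T.erase v).card := Finset.card_le_card this
      _ < T.card := by
          rw [Finset.card_erase_of_mem hv]
          exact Nat.sub_lt (Finset.card_pos.2 ⟨v, hv⟩) one_pos
  have hrk_mono : ∀ u ∈ T, ∀ v ∈ T, g u < g v → rk u < rk v := by
    intro u hu v hv huv
    apply Finset.card_lt_card
    rw [Finset.ssubset_iff_of_subset]
    · exact ⟨u, Finset.mem_filter.2 ⟨hu, huv⟩, fun h => lt_irrefl _ (Finset.mem_filter.1 h).2⟩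
    · intro z hz
      rw [Finset.mem_filter] at hz ⊢
      exact ⟨hz.1, hz.2.trans huv⟩
  set N : ℚ := (T.card : ℚ) + 1 with hN
  have hN0 : 0 < N := by
    rw [hN]
    have : (0:ℚ) ≤ (T.card : ℚ) := Nat.cast_nonneg _
    linarith
  set f : V → ℚ := fun v => if v ∈ T then a + (c - a) * ((rk v : ℚ) + 1) / N else g v with hf
  have hfT : ∀ v ∈ T, f v = a + (c - a) * ((rk v : ℚ) + 1) / N := by
    intro v hv; simp [hf, hv]
  have hfnT : ∀ v, v ∉ T → f v = g v := by
    intro v hv; simp [hf, hv]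
  have hval : ∀ v ∈ T, a < f v ∧ f v < c := by
    intro v hv
    rw [hfT v hv]
    have hca : 0 < c - a := by linarith
    constructor
    · have h0 : (0:ℚ) < (rk v : ℚ) + 1 := by
        have : (0:ℚ) ≤ (rk v : ℚ) := Nat.cast_nonneg _
        linarith
      have : 0 < (c - a) * ((rk v : ℚ) + 1) / N := div_pos (mul_pos hca h0) hN0
      linarith
    · have h1 : ((rk v : ℚ) + 1) < N := by
        rw [hN]
        have := hrk_lt v hv
        exact_mod_cast Nat.add_lt_add_right this 1
      have h2 : (c - a) * ((rk v : ℚ) + 1) / N < (c - a) := by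
        rw [div_lt_iff₀ hN0]
        exact mul_lt_mul_of_pos_left h1 hca
      linarith
  have hmono : ∀ u ∈ T, ∀ v ∈ T, g u < g v → f u < f v := by
    intro u hu v hv huv
    rw [hfT u hu, hfT v hv]
    have h1 : ((rk u : ℚ) + 1) < ((rk v : ℚ) + 1) := by
      exact_mod_cast Nat.add_lt_add_right (hrk_mono u hu v hv huv) 1
    have hca : 0 < c - a := by linarith
    have h2 : (c - a) * ((rk u : ℚ) + 1) / N < (c - a) * ((rk v : ℚ) + 1) / N :=
      (div_lt_div_iff_of_pos_right hN0).2 (mul_lt_mul_of_pos_left h1 hca)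
    linarith
  refine ⟨f, ?_, hfnT, fun v hv => ⟨(hval v hv).1, (hval v hv).2.trans hcb⟩, hmono⟩
  intro u v huv
  by_cases hu : u ∈ T <;> by_cases hv : v ∈ T
  · by_contra hne
    have hgne : g u ≠ g v := fun h => hne (hg h)
    rcases lt_or_gt_of_ne hgne with h | h
    · exact absurd huv (ne_of_lt (hmono u hu v hv h))
    · exact absurd huv.symm (ne_of_lt (hmono v hv u hu h))
  · exfalso
    rw [hfnT v hv] at huv
    have h1 := (hval u hu).1
    have h2 := (hval u hu).2
    rw [huv] at h1 h2
    exact absurd h2 (not_lt.2 (le_of_lt (hfree v hv h1)))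
  · exfalso
    rw [hfnT u hu] at huv
    have h1 := (hval v hv).1
    have h2 := (hval v hv).2
    rw [← huv] at h1 h2
    exact absurd h2 (not_lt.2 (le_of_lt (hfree u hu h1)))
  · rw [hfnT u hu, hfnT v hv] at huv
    exact hg huv

end Squeeze
section Decomp

open Classical

theorem subst_adj_inr_inr {V₁ V₂ : Type} (D₁ : Dig V₁) (u : V₁) (D₂ : Dig V₂) (a b : V₂) :
    (D₁.subst u D₂).Adj (Sum.inr a) (Sum.inr b) ↔ D₂.Adj a b := by
  constructor
  · rintro (h | ⟨a', b', ha', hb', h⟩)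
    · exact absurd h (D₁.irrefl u)
    · obtain rfl := Sum.inr_injective ha'
      obtain rfl := Sum.inr_injective hb'
      exact h
  · intro h
    exact Or.inr ⟨a, b, rfl, rfl, h⟩

theorem subst_adj_not_both_inr {V₁ V₂ : Type} (D₁ : Dig V₁) (u : V₁) (D₂ : Dig V₂)
    (x y : {v : V₁ // v ≠ u} ⊕ V₂) (h : ¬ (∃ a b, x = Sum.inr a ∧ y = Sum.inr b)) :
    (D₁.subst u D₂).Adj x y ↔
      D₁.Adj (Sum.elim Subtype.val (fun _ => u) x) (Sum.elim Subtype.val (fun _ => u) y) := by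
  constructor
  · rintro (h' | ⟨a, b, ha, hb, _⟩)
    · exact h'
    · exact absurd ⟨a, b, ha, hb⟩ h
  · intro h'
    exact Or.inl h'

theorem decompA (𝒯 : ∀ V : Type, Dig V → Prop) :
    ∀ (V : Type) (D : Dig V), SubstClosureD 𝒯 V D → ∀ (_ : Fintype V) (S : Finset V),
      (∃ a ∈ S, ∃ b ∈ S, a ≠ b) →
      ∃ (W : Type) (_ : Fintype W) (H : Dig W), 𝒯 W H ∧ ∃ π : V → W,
        (∀ u ∈ S, ∀ v ∈ S, π u ≠ π v → (D.Adj u v ↔ H.Adj (π u) (π v))) ∧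
        (∃ u ∈ S, ∃ v ∈ S, π u ≠ π v) := by
  intro V D hD
  induction hD with
  | base V D hT =>
    intro fV S hS
    exact ⟨V, fV, D, hT, id, fun u _ v _ _ => Iff.rfl, hS⟩
  | step V₁ V₂ D₁ u D₂ h1 h2 ih1 ih2 =>
    intro fV S hS
    letI : Fintype ({v : V₁ // v ≠ u} ⊕ V₂) := fV
    letI fV₂ : Fintype V₂ :=
      Fintype.ofInjective (Sum.inr : V₂ → {v : V₁ // v ≠ u} ⊕ V₂) Sum.inr_injective
    letI fsub : Fintype {v : V₁ // v ≠ u} :=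
      Fintype.ofInjective (Sum.inl : {v : V₁ // v ≠ u} → {v : V₁ // v ≠ u} ⊕ V₂) Sum.inl_injective
    letI fV₁ : Fintype V₁ := by
      refine Fintype.ofInjective
        (fun v => if h : v = u then Sum.inl () else Sum.inr (⟨v, h⟩ : {v : V₁ // v ≠ u})) ?_
      intro x y hxy
      by_cases hx : x = u <;> by_cases hy : y = u
      · exact hx.trans hy.symm
      · simp [hx, hy] at hxy
      · simp [hx, hy] at hxy
      · simp [hx, hy] at hxy; exact hxy
    set pl : ({v : V₁ // v ≠ u} ⊕ V₂) → V₁ := Sum.elim Subtype.val (fun _ => u) with hpl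
    by_cases hL : ∃ z ∈ S, ∃ v₁ : {v : V₁ // v ≠ u}, z = Sum.inl v₁
    · -- some left element: use the decomposition of D₁
      obtain ⟨z, hz, v₁, rfl⟩ := hL
      -- find an element of S with a different pl-value
      obtain ⟨a, ha, b, hb, hab⟩ := hS
      have hpair : ∃ s ∈ S, pl s ≠ pl (Sum.inl v₁) := by
        have hinj : ∀ s, pl s = (v₁ : V₁) → s = Sum.inl v₁ := by
          intro s hs
          match s with
          | Sum.inl w => simp only [hpl, Sum.elim_inl] at hs; exact congrArg _ (Subtype.ext hs)
          | Sum.inr b' => simp only [hpl, Sum.elim_inr] at hs; exact absurd hs.symm v₁.2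
        by_cases h1' : pl a = pl (Sum.inl v₁)
        · by_cases h2' : pl b = pl (Sum.inl v₁)
          · exfalso
            have e1 := hinj a (by simpa [hpl] using h1')
            have e2 := hinj b (by simpa [hpl] using h2')
            exact hab (e1.trans e2.symm)
          · exact ⟨b, hb, h2'⟩
        · exact ⟨a, ha, h1'⟩
      obtain ⟨s, hs, hsne⟩ := hpair
      obtain ⟨W, fW, H, hH, π₁, hmod₁, hval₁⟩ :=
        ih1 fV₁ (S.image pl) ⟨pl s, Finset.mem_image_of_mem pl hs,
          pl (Sum.inl v₁), Finset.mem_image_of_mem pl hz, hsne⟩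
      refine ⟨W, fW, H, hH, π₁ ∘ pl, ?_, ?_⟩
      · intro u' hu' v' hv' hne
        have hplne : pl u' ≠ pl v' := fun h => hne (congrArg π₁ h)
        have hnotboth : ¬ (∃ a b, u' = Sum.inr a ∧ v' = Sum.inr b) := by
          rintro ⟨a', b', rfl, rfl⟩
          exact hplne rfl
        rw [subst_adj_not_both_inr D₁ u D₂ u' v' hnotboth]
        exact hmod₁ (pl u') (Finset.mem_image_of_mem pl hu') (pl v')
          (Finset.mem_image_of_mem pl hv') hne
      · obtain ⟨p, hp, q, hq, hpq⟩ := hval₁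
        obtain ⟨sp, hsp, hsp'⟩ := Finset.mem_image.1 hp
        obtain ⟨sq, hsq, hsq'⟩ := Finset.mem_image.1 hq
        exact ⟨sp, hsp, sq, hsq, by simp only [Function.comp_apply, hsp', hsq']; exact hpq⟩
    · -- all elements of S are inr: use the decomposition of D₂
      have hR : ∀ z ∈ S, ∃ b : V₂, z = Sum.inr b := by
        intro z hz
        match z with
        | Sum.inl w => exact absurd ⟨Sum.inl w, hz, w, rfl⟩ hL
        | Sum.inr b => exact ⟨b, rfl⟩
      obtain ⟨a, ha, b, hb, hab⟩ := hS
      obtain ⟨a₂, rfl⟩ := hR a ha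
      obtain ⟨b₂, rfl⟩ := hR b hb
      set er : ({v : V₁ // v ≠ u} ⊕ V₂) → V₂ := Sum.elim (fun _ => a₂) id with her
      have hab₂ : a₂ ≠ b₂ := fun h => hab (congrArg Sum.inr h)
      obtain ⟨W, fW, H, hH, π₂, hmod₂, hval₂⟩ :=
        ih2 fV₂ (S.image er) ⟨a₂, Finset.mem_image_of_mem er ha,
          b₂, Finset.mem_image_of_mem er hb, hab₂⟩
      refine ⟨W, fW, H, hH, π₂ ∘ er, ?_, ?_⟩
      · intro u' hu' v' hv' hne
        obtain ⟨ua, rfl⟩ := hR u' hu'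
        obtain ⟨va, rfl⟩ := hR v' hv'
        rw [subst_adj_inr_inr]
        exact hmod₂ ua (Finset.mem_image_of_mem er hu') va (Finset.mem_image_of_mem er hv') hne
      · obtain ⟨p, hp, q, hq, hpq⟩ := hval₂
        obtain ⟨sp, hsp, hsp'⟩ := Finset.mem_image.1 hp
        obtain ⟨sq, hsq, hsq'⟩ := Finset.mem_image.1 hq
        exact ⟨sp, hsp, sq, hsq, by simp only [Function.comp_apply, hsp', hsq']; exact hpq⟩

end Decomp
section KZ

open Classical

theorem exists_proper_coloring {W : Type} [Fintype W] {G : SimpleGraph W} {K : ℕ}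
    (h : gChi G ≤ K) : ∃ φ : W → Fin K, ∀ a b, G.Adj a b → φ a ≠ φ b := by
  have hne : {n | G.Colorable n}.Nonempty := ⟨Fintype.card W, G.colorable_of_fintype⟩
  have h1 : G.Colorable (gChi G) := Nat.sInf_mem hne
  obtain ⟨C⟩ := h1.mono h
  exact ⟨C, fun a b hab => C.valid hab⟩

theorem K_pos (𝒯 : ∀ V : Type, Dig V → Prop) (K : ℕ)
    (hK : ∀ (V : Type) [Fintype V] (D : Dig V), 𝒯 V D → gChi D.underlying ≤ K) :
    ∀ (V : Type) (D : Dig V), SubstClosureD 𝒯 V D → ∀ (_ : Fintype V), Nonempty V → 1 ≤ K := by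
  intro V D hD
  induction hD with
  | base V D hT =>
    intro fV hne
    obtain ⟨v⟩ := hne
    letI := fV
    obtain ⟨φ, -⟩ := exists_proper_coloring (G := D.underlying) (hK V D hT)
    exact lt_of_le_of_lt (Nat.zero_le _) (φ v).2
  | step V₁ V₂ D₁ u D₂ h1 h2 ih1 ih2 =>
    intro fV _
    letI : Fintype ({v : V₁ // v ≠ u} ⊕ V₂) := fV
    letI fsub : Fintype {v : V₁ // v ≠ u} :=
      Fintype.ofInjective (Sum.inl : {v : V₁ // v ≠ u} → {v : V₁ // v ≠ u} ⊕ V₂) Sum.inl_injective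
    letI fV₁ : Fintype V₁ := by
      refine Fintype.ofInjective
        (fun v => if h : v = u then Sum.inl () else Sum.inr (⟨v, h⟩ : {v : V₁ // v ≠ u})) ?_
      intro x y hxy
      by_cases hx : x = u <;> by_cases hy : y = u
      · exact hx.trans hy.symm
      · simp [hx, hy] at hxy
      · simp [hx, hy] at hxy
      · simp [hx, hy] at hxy; exact hxy
    exact ih1 fV₁ ⟨u⟩

end KZ

section GoodOrders

open Classical

variable {V W : Type} [Fintype V] (D : Dig V) (H : Dig W) (π : V → W) (S : Finset V)

/-- `v` has an in-neighbour (of its fiber) coming later in the order. -/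
def redA (ρ : V → ℚ) (v : V) : Prop := ∃ z ∈ S, π z ≠ π v ∧ H.Adj (π z) (π v) ∧ ρ v < ρ z

/-- `v` has an out-neighbour (of its fiber) coming earlier in the order. -/
def redB (ρ : V → ℚ) (v : V) : Prop := ∃ z ∈ S, π z ≠ π v ∧ H.Adj (π v) (π z) ∧ ρ z < ρ v

def redV (ρ : V → ℚ) (v : V) : Prop := redA H π S ρ v ∨ redB H π S ρ v

/-- In each fiber, red vertices are all or nothing. -/
def ρGood (ρ : V → ℚ) : Prop :=
  ∀ u ∈ S, ∀ v ∈ S, π u = π v → redV H π S ρ u → redV H π S ρ v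

theorem goodify (hmod : ∀ u ∈ S, ∀ v ∈ S, π u ≠ π v → (D.Adj u v ↔ H.Adj (π u) (π v)))
    {w : ℕ} :
    ∀ (m : ℕ) (ρ : V → ℚ), Function.Injective ρ → CliqueBound D w ρ S →
      (S.filter (fun v => redV H π S ρ v)).card ≤ m →
      ∃ ρ', Function.Injective ρ' ∧ CliqueBound D w ρ' S ∧ ρGood H π S ρ' := by
  intro m
  induction m with
  | zero =>
    intro ρ hρ hcb hcard
    refine ⟨ρ, hρ, hcb, ?_⟩
    intro u hu v hv _ hred
    exfalso
    have : u ∈ S.filter (fun v => redV H π S ρ v) := Finset.mem_filter.2 ⟨hu, hred⟩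
    rw [Finset.card_eq_zero.1 (Nat.le_zero.1 hcard)] at this
    exact absurd this (Finset.notMem_empty u)
  | succ m ih =>
    intro ρ hρ hcb hcard
    by_cases hg : ρGood H π S ρ
    · exact ⟨ρ, hρ, hcb, hg⟩
    unfold ρGood at hg
    push_neg at hg
    obtain ⟨u₀, hu₀S, q, hqS, hπeq, hu₀red, hqnred⟩ := hg
    set x : W := π q with hx
    have hu₀x : π u₀ = x := hπeq
    -- facts from q not being red
    have nA : ∀ z ∈ S, π z ≠ x → H.Adj (π z) x → ρ z < ρ q := by
      intro z hz hzx hadj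
      have hne : ρ z ≠ ρ q := fun h => hzx (by rw [hρ h])
      rcases lt_or_gt_of_ne hne with h | h
      · exact h
      · exact absurd (Or.inl ⟨z, hz, hzx, hadj, h⟩) hqnred
    have nB : ∀ z ∈ S, π z ≠ x → H.Adj x (π z) → ρ q < ρ z := by
      intro z hz hzx hadj
      have hne : ρ z ≠ ρ q := fun h => hzx (by rw [hρ h])
      rcases lt_or_gt_of_ne hne with h | h
      · exact absurd (Or.inr ⟨z, hz, hzx, hadj, h⟩) hqnred
      · exact h
    set T : Finset V := S.filter (fun z => π z = x) with hT
    set inS : Finset V := S.filter (fun z => π z ≠ x ∧ H.Adj (π z) x) with hinS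
    set outS : Finset V := S.filter (fun z => π z ≠ x ∧ H.Adj x (π z)) with houtS
    set α : ℚ := (insert (ρ q - 1) (inS.image ρ)).max' (Finset.insert_nonempty _ _) with hα
    set β : ℚ := (insert (ρ q + 1) (outS.image ρ)).min' (Finset.insert_nonempty _ _) with hβ
    have hαq : α < ρ q := by
      rw [hα, Finset.max'_lt_iff]
      intro y hy
      rcases Finset.mem_insert.1 hy with rfl | hy
      · linarith
      · obtain ⟨z, hz, rfl⟩ := Finset.mem_image.1 hy
        rw [hinS, Finset.mem_filter] at hz
        exact nA z hz.1 hz.2.1 hz.2.2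
    have hqβ : ρ q < β := by
      rw [hβ, Finset.lt_min'_iff]
      intro y hy
      rcases Finset.mem_insert.1 hy with rfl | hy
      · linarith
      · obtain ⟨z, hz, rfl⟩ := Finset.mem_image.1 hy
        rw [houtS, Finset.mem_filter] at hz
        exact nB z hz.1 hz.2.1 hz.2.2
    have hin_le : ∀ z ∈ S, π z ≠ x → H.Adj (π z) x → ρ z ≤ α := by
      intro z hz h1 h2
      exact Finset.le_max' _ _ (Finset.mem_insert_of_mem
        (Finset.mem_image_of_mem ρ (by rw [hinS, Finset.mem_filter]; exact ⟨hz, h1, h2⟩)))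
    have hout_ge : ∀ z ∈ S, π z ≠ x → H.Adj x (π z) → β ≤ ρ z := by
      intro z hz h1 h2
      exact Finset.min'_le _ _ (Finset.mem_insert_of_mem
        (Finset.mem_image_of_mem ρ (by rw [houtS, Finset.mem_filter]; exact ⟨hz, h1, h2⟩)))
    obtain ⟨ρ', hρ', hfix, hrange, hmono⟩ := squeeze ρ hρ T (hαq.trans hqβ)
    have hmemT : ∀ z, z ∈ T ↔ (z ∈ S ∧ π z = x) := by
      intro z; rw [hT, Finset.mem_filter]
    have horder : ∀ p ∈ T, ∀ p' ∈ T, (ρ' p < ρ' p' ↔ ρ p < ρ p') := by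
      intro p hp p' hp'
      constructor
      · intro h
        rcases lt_trichotomy (ρ p) (ρ p') with h' | h' | h'
        · exact h'
        · exact absurd (congrArg ρ' (hρ h')) (ne_of_lt h)
        · exact absurd (hmono p' hp' p hp h') (not_lt.2 (le_of_lt h))
      · exact hmono p hp p' hp'
    -- key: backedge pairs w.r.t. ρ' inside S are backedge pairs w.r.t. ρ
    have hedge : ∀ p ∈ S, ∀ p' ∈ S, bePair D ρ' p p' → bePair D ρ p p' := by
      have main : ∀ p ∈ S, ∀ p' ∈ S, p ∈ T → p' ∉ T → ¬ bePair D ρ' p p' := by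
        intro p hp p' hp' hpT hp'T hbe
        have hπp : π p = x := ((hmemT p).1 hpT).2
        have hπp' : π p' ≠ x := fun h => hp'T ((hmemT p').2 ⟨hp', h⟩)
        have hπne : π p' ≠ π p := by rw [hπp]; exact hπp'
        have hfx : ρ' p' = ρ p' := hfix p' hp'T
        by_cases hA : H.Adj (π p') x
        · -- p' is an in-vertex of the fiber: sits at ≤ α, below all of T
          have h1 : ρ' p' ≤ α := by rw [hfx]; exact hin_le p' hp' hπp' hA
          have h2 : α < ρ' p := (hrange p hpT).1
          have hadj : ¬ D.Adj p p' := by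
            intro hc
            have := (hmod p hp p' hp' (by rw [hπp]; exact fun h => hπp' h.symm)).1 hc
            rw [hπp] at this
            exact H.asymm _ _ this hA
          rcases hbe with ⟨hlt, _⟩ | ⟨_, hc⟩
          · linarith
          · exact hadj hc
        · by_cases hB : H.Adj x (π p')
          · have h1 : β ≤ ρ' p' := by rw [hfx]; exact hout_ge p' hp' hπp' hB
            have h2 : ρ' p < β := (hrange p hpT).2
            have hadj : ¬ D.Adj p' p := by
              intro hc
              have := (hmod p' hp' p hp hπne).1 hc
              rw [hπp] at this
              exact H.asymm _ _ hB this
            rcases hbe with ⟨_, hc⟩ | ⟨hlt, _⟩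
            · exact hadj hc
            · linarith
          · have hadj1 : ¬ D.Adj p p' := by
              intro hc
              have := (hmod p hp p' hp' (fun h => hπp' (hπp ▸ h.symm))).1 hc
              rw [hπp] at this; exact hB this
            have hadj2 : ¬ D.Adj p' p := by
              intro hc
              have := (hmod p' hp' p hp hπne).1 hc
              rw [hπp] at this; exact hA this
            rcases hbe with ⟨_, hc⟩ | ⟨_, hc⟩
            · exact hadj2 hc
            · exact hadj1 hc
      intro p hp p' hp' hbe
      by_cases hpT : p ∈ T <;> by_cases hp'T : p' ∈ T
      · rcases hbe with ⟨h1, h2⟩ | ⟨h1, h2⟩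
        · exact Or.inl ⟨(horder p hpT p' hp'T).1 h1, h2⟩
        · exact Or.inr ⟨(horder p' hp'T p hpT).1 h1, h2⟩
      · exact absurd hbe (main p hp p' hp' hpT hp'T)
      · exact ((main p' hp' p hp hp'T hpT) ((bePair_comm D).1 hbe)).elim
      · rcases hbe with ⟨h1, h2⟩ | ⟨h1, h2⟩
        · exact Or.inl ⟨by rw [← hfix p hpT, ← hfix p' hp'T]; exact h1, h2⟩
        · exact Or.inr ⟨by rw [← hfix p hpT, ← hfix p' hp'T]; exact h1, h2⟩
    have hcb' : CliqueBound D w ρ' S := by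
      intro t ht hcl
      exact hcb t ht (fun a ha b hb hab => hedge a (ht ha) b (ht hb) (hcl a ha b hb hab))
    -- no vertex of the fiber is red for ρ'
    have hTnred : ∀ v ∈ T, ¬ redV H π S ρ' v := by
      intro v hvT hred
      have hπv : π v = x := ((hmemT v).1 hvT).2
      rcases hred with ⟨z, hz, hzne, hadj, hlt⟩ | ⟨z, hz, hzne, hadj, hlt⟩
      · have hzT : z ∉ T := fun h => hzne (((hmemT z).1 h).2.trans hπv.symm)
        have : ρ' z = ρ z := hfix z hzT
        rw [hπv] at hadj hzne
        have h1 : ρ z ≤ α := hin_le z hz hzne hadj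
        have h2 : α < ρ' v := (hrange v hvT).1
        linarith [hlt, this ▸ h1]
      · have hzT : z ∉ T := fun h => hzne (((hmemT z).1 h).2.trans hπv.symm)
        have heq : ρ' z = ρ z := hfix z hzT
        rw [hπv] at hadj hzne
        have h1 : β ≤ ρ z := hout_ge z hz hzne hadj
        have h2 : ρ' v < β := (hrange v hvT).2
        linarith [hlt, heq ▸ h1]
    -- red vertices w.r.t. ρ' are red w.r.t. ρ
    have hred_shrink : ∀ v ∈ S, redV H π S ρ' v → redV H π S ρ v := by
      intro v hv hred
      by_cases hvT : v ∈ T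
      · exact absurd hred (hTnred v hvT)
      have hfv : ρ' v = ρ v := hfix v hvT
      have hπv : π v ≠ x := fun h => hvT ((hmemT v).2 ⟨hv, h⟩)
      rcases hred with ⟨z, hz, hzne, hadj, hlt⟩ | ⟨z, hz, hzne, hadj, hlt⟩
      · by_cases hzT : z ∈ T
        · exfalso
          have hπz : π z = x := ((hmemT z).1 hzT).2
          rw [hπz] at hadj
          have h1 : β ≤ ρ v := hout_ge v hv hπv hadj
          have h2 : ρ' z < β := (hrange z hzT).2
          rw [hfv] at hlt
          linarith
        · exact Or.inl ⟨z, hz, hzne, hadj, by rw [← hfv, ← hfix z hzT]; exact hlt⟩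
      · by_cases hzT : z ∈ T
        · exfalso
          have hπz : π z = x := ((hmemT z).1 hzT).2
          rw [hπz] at hadj
          have h1 : ρ v ≤ α := hin_le v hv hπv hadj
          have h2 : α < ρ' z := (hrange z hzT).1
          rw [hfv] at hlt
          linarith
        · exact Or.inr ⟨z, hz, hzne, hadj, by rw [← hfv, ← hfix z hzT]; exact hlt⟩
    -- the red set strictly decreased
    have hsub : S.filter (fun v => redV H π S ρ' v) ⊆
        (S.filter (fun v => redV H π S ρ v)).erase u₀ := by
      intro v hv
      rw [Finset.mem_filter] at hv
      rw [Finset.mem_erase, Finset.mem_filter]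
      refine ⟨?_, hv.1, hred_shrink v hv.1 hv.2⟩
      intro hvu
      subst hvu
      exact hTnred v ((hmemT v).2 ⟨hv.1, hu₀x⟩) hv.2
    have hcard' : (S.filter (fun v => redV H π S ρ' v)).card ≤ m := by
      have h1 := Finset.card_le_card hsub
      have h2 : u₀ ∈ S.filter (fun v => redV H π S ρ v) := Finset.mem_filter.2 ⟨hu₀S, hu₀red⟩
      rw [Finset.card_erase_of_mem h2] at h1
      omega
    exact ih ρ' hρ' hcb' hcard'

end GoodOrders
section Ext

open Classical

variable {V W : Type} [Fintype V] (D : Dig V) (H : Dig W) (π : V → W) (S : Finset V)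

theorem cliqueBound_partA
    (hmod : ∀ u ∈ S, ∀ v ∈ S, π u ≠ π v → (D.Adj u v ↔ H.Adj (π u) (π v)))
    {w : ℕ} {ρ : V → ℚ} (hcb : CliqueBound D (w+1) ρ S) (x : W) :
    CliqueBound D w ρ (S.filter (fun v => π v = x ∧ redA H π S ρ v)) := by
  intro t ht hcl
  rcases t.eq_empty_or_nonempty with rfl | htne
  · simp
  have hmax : ∃ m ∈ t, ∀ a ∈ t, ρ a ≤ ρ m := by
    obtain ⟨m, hm, hm'⟩ := Finset.mem_image.1 ((t.image ρ).max'_mem (htne.image ρ))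
    exact ⟨m, hm, fun a ha => hm' ▸ Finset.le_max' _ _ (Finset.mem_image_of_mem ρ ha)⟩
  obtain ⟨m, hmt, hmax⟩ := hmax
  have hmprops := Finset.mem_filter.1 (ht hmt)
  obtain ⟨hmS, hmx, z, hzS, hzne, hzadj, hzlt⟩ := hmprops
  have hzt : z ∉ t := by
    intro hzt
    have := (Finset.mem_filter.1 (ht hzt)).2.1
    rw [hmx] at hzne
    exact hzne this
  have hins : insert z t ⊆ S := by
    intro a ha
    rcases Finset.mem_insert.1 ha with rfl | ha
    · exact hzS
    · exact (Finset.mem_filter.1 (ht ha)).1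
  have hpair : ∀ a ∈ t, bePair D ρ a z := by
    intro a ha
    obtain ⟨haS, hax, -⟩ := Finset.mem_filter.1 (ht ha)
    have haz : D.Adj z a := by
      refine (hmod z hzS a haS ?_).2 ?_
      · rw [hax, hmx] at *; exact hzne
      · rw [hax, hmx] at *; exact hzadj
    exact Or.inl ⟨lt_of_le_of_lt (hmax a ha) hzlt, haz⟩
  have hclins : ∀ a ∈ insert z t, ∀ b ∈ insert z t, a ≠ b → bePair D ρ a b := by
    intro a ha b hb hab
    rcases Finset.mem_insert.1 ha with rfl | ha' <;> rcases Finset.mem_insert.1 hb with rfl | hb'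
    · exact absurd rfl hab
    · exact (bePair_comm D).1 (hpair b hb')
    · exact hpair a ha'
    · exact hcl a ha' b hb' hab
  have := hcb (insert z t) hins hclins
  rw [Finset.card_insert_of_notMem hzt] at this
  omega

theorem cliqueBound_partB
    (hmod : ∀ u ∈ S, ∀ v ∈ S, π u ≠ π v → (D.Adj u v ↔ H.Adj (π u) (π v)))
    {w : ℕ} {ρ : V → ℚ} (hcb : CliqueBound D (w+1) ρ S) (x : W) :
    CliqueBound D w ρ (S.filter (fun v => π v = x ∧ ¬ redA H π S ρ v ∧ redB H π S ρ v)) := by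
  intro t ht hcl
  rcases t.eq_empty_or_nonempty with rfl | htne
  · simp
  have hmin : ∃ m ∈ t, ∀ a ∈ t, ρ m ≤ ρ a := by
    obtain ⟨m, hm, hm'⟩ := Finset.mem_image.1 ((t.image ρ).min'_mem (htne.image ρ))
    exact ⟨m, hm, fun a ha => hm' ▸ Finset.min'_le _ _ (Finset.mem_image_of_mem ρ ha)⟩
  obtain ⟨m, hmt, hmin⟩ := hmin
  obtain ⟨hmS, hmx, -, z, hzS, hzne, hzadj, hzlt⟩ := Finset.mem_filter.1 (ht hmt)
  have hzt : z ∉ t := by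
    intro hzt
    have := (Finset.mem_filter.1 (ht hzt)).2.1
    rw [hmx] at hzne
    exact hzne this
  have hins : insert z t ⊆ S := by
    intro a ha
    rcases Finset.mem_insert.1 ha with rfl | ha
    · exact hzS
    · exact (Finset.mem_filter.1 (ht ha)).1
  have hpair : ∀ a ∈ t, bePair D ρ a z := by
    intro a ha
    obtain ⟨haS, hax, -⟩ := Finset.mem_filter.1 (ht ha)
    have haz : D.Adj a z := by
      refine (hmod a haS z hzS ?_).2 ?_
      · rw [hax, hmx] at *; exact fun h => hzne h.symm
      · rw [hax, hmx] at *; exact hzadj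
    exact Or.inr ⟨lt_of_lt_of_le hzlt (hmin a ha), haz⟩
  have hclins : ∀ a ∈ insert z t, ∀ b ∈ insert z t, a ≠ b → bePair D ρ a b := by
    intro a ha b hb hab
    rcases Finset.mem_insert.1 ha with rfl | ha' <;> rcases Finset.mem_insert.1 hb with rfl | hb'
    · exact absurd rfl hab
    · exact (bePair_comm D).1 (hpair b hb')
    · exact hpair a ha'
    · exact hcl a ha' b hb' hab
  have := hcb (insert z t) hins hclins
  rw [Finset.card_insert_of_notMem hzt] at this
  omega

end Ext
section MainInduction

open Classical

theorem mainT (𝒯 : ∀ V : Type, Dig V → Prop) (K : ℕ)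
    (hK : ∀ (V : Type) [Fintype V] (D : Dig V), 𝒯 V D → gChi D.underlying ≤ K)
    (V : Type) [Fintype V] (D : Dig V) (hD : SubstClosureD 𝒯 V D) :
    ∀ (w n : ℕ) (S : Finset V) (ρ : V → ℚ), Function.Injective ρ →
      S.card ≤ n → CliqueBound D w ρ S →
      ∃ c : V → ℕ, (∀ v ∈ S, c v < (2*K)^w) ∧
        ∀ i : ℕ, D.AcyclicOn {v : V | v ∈ S ∧ c v = i} := by
  have hempty : ∀ (S : Finset V), S = ∅ → ∀ N : ℕ, ∃ c : V → ℕ, (∀ v ∈ S, c v < N) ∧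
      ∀ i : ℕ, D.AcyclicOn {v : V | v ∈ S ∧ c v = i} := by
    intro S hS N
    refine ⟨fun _ => 0, by simp [hS], fun i => D.acyclicOn_subsingleton ?_⟩
    intro a ha
    rw [hS] at ha
    exact absurd ha.1 (Finset.notMem_empty a)
  intro w
  induction w with
  | zero =>
    intro n S ρ hρ hcard hcb
    exact hempty S (hcb.card_le) _
  | succ w ihw =>
    intro n
    induction n with
    | zero =>
      intro S ρ hρ hcard hcb
      exact hempty S (Finset.card_eq_zero.1 (Nat.le_zero.1 hcard)) _
    | succ n ihn =>
      intro S ρ₀ hρ₀ hcard hcb₀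
      by_cases hsmall : ∀ a ∈ S, ∀ b ∈ S, a = b
      · -- at most one vertex
        rcases S.eq_empty_or_nonempty with rfl | ⟨v₀, hv₀⟩
        · exact hempty ∅ rfl _
        have hK1 : 1 ≤ K := K_pos 𝒯 K hK V D hD inferInstance ⟨v₀⟩
        refine ⟨fun _ => 0, ?_, fun i => D.acyclicOn_subsingleton ?_⟩
        · intro v hv
          have : 0 < (2*K)^(w+1) := pow_pos (by omega) _
          exact this
        · intro a ha b hb
          exact hsmall a ha.1 b hb.1
      push_neg at hsmall
      obtain ⟨a₀, ha₀, b₀, hb₀, hab₀⟩ := hsmall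
      have hK1 : 1 ≤ K := K_pos 𝒯 K hK V D hD inferInstance ⟨a₀⟩
      obtain ⟨W, fW, H, hH, π, hmod, hπvals⟩ :=
        decompA 𝒯 V D hD inferInstance S ⟨a₀, ha₀, b₀, hb₀, hab₀⟩
      letI := fW
      obtain ⟨φ, hφ⟩ := exists_proper_coloring (G := H.underlying) (hK W H hH)
      -- make the order good
      obtain ⟨ρ, hρ, hcb, hgood⟩ := goodify D H π S hmod
        ((S.filter (fun v => redV H π S ρ₀ v)).card) ρ₀ hρ₀ hcb₀ le_rfl
      -- recursive colorings for the red parts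
      have hA : ∀ x : W, ∃ cA : V → ℕ,
          (∀ v ∈ S.filter (fun v => π v = x ∧ redA H π S ρ v), cA v < (2*K)^w) ∧
          ∀ i, D.AcyclicOn
            {v : V | v ∈ S.filter (fun v => π v = x ∧ redA H π S ρ v) ∧ cA v = i} := by
        intro x
        exact ihw _ _ ρ hρ le_rfl (cliqueBound_partA D H π S hmod hcb x)
      have hB : ∀ x : W, ∃ cB : V → ℕ,
          (∀ v ∈ S.filter (fun v => π v = x ∧ ¬ redA H π S ρ v ∧ redB H π S ρ v),
            cB v < (2*K)^w) ∧
          ∀ i, D.AcyclicOn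
            {v : V | v ∈ S.filter (fun v => π v = x ∧ ¬ redA H π S ρ v ∧ redB H π S ρ v)
              ∧ cB v = i} := by
        intro x
        exact ihw _ _ ρ hρ le_rfl (cliqueBound_partB D H π S hmod hcb x)
      -- recursive colorings for whole fibers
      have hFproper : ∀ x : W, (S.filter (fun v => π v = x)).card ≤ n := by
        intro x
        obtain ⟨p, hp, q, hq, hpq⟩ := hπvals
        have : ∃ z ∈ S, π z ≠ x := by
          by_cases hpx : π p = x
          · exact ⟨q, hq, fun h => hpq (hpx.trans h.symm)⟩
          · exact ⟨p, hp, hpx⟩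
        obtain ⟨z, hz, hzx⟩ := this
        have hsub : S.filter (fun v => π v = x) ⊆ S.erase z := by
          intro v hv
          rw [Finset.mem_filter] at hv
          rw [Finset.mem_erase]
          exact ⟨fun h => hzx (h ▸ hv.2), hv.1⟩
        calc (S.filter (fun v => π v = x)).card ≤ (S.erase z).card := Finset.card_le_card hsub
          _ = S.card - 1 := Finset.card_erase_of_mem hz
          _ ≤ n := by omega
      have hF : ∀ x : W, ∃ cF : V → ℕ,
          (∀ v ∈ S.filter (fun v => π v = x), cF v < (2*K)^(w+1)) ∧
          ∀ i, D.AcyclicOn {v : V | v ∈ S.filter (fun v => π v = x) ∧ cF v = i} := by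
        intro x
        exact ihn _ ρ hρ (hFproper x) (CliqueBound.anti D (Finset.filter_subset _ _) hcb)
      choose cA hA1 hA2 using hA
      choose cB hB1 hB2 using hB
      choose cF hF1 hF2 using hF
      -- the final coloring
      set c : V → ℕ := fun v =>
        if v ∈ S then
          (if redA H π S ρ v then 2 * (φ (π v)).val + 2*K * cA (π v) v
           else if redB H π S ρ v then (2 * (φ (π v)).val + 1) + 2*K * cB (π v) v
           else cF (π v) v)
        else 0 with hc
      have hcA : ∀ v ∈ S, redA H π S ρ v → c v = 2 * (φ (π v)).val + 2*K * cA (π v) v := by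
        intro v hv hr; simp [hc, hv, hr]
      have hcB : ∀ v ∈ S, ¬ redA H π S ρ v → redB H π S ρ v →
          c v = (2 * (φ (π v)).val + 1) + 2*K * cB (π v) v := by
        intro v hv hr hr'; simp [hc, hv, hr, hr']
      have hcF : ∀ v ∈ S, ¬ redV H π S ρ v → c v = cF (π v) v := by
        intro v hv hr
        have h1 : ¬ redA H π S ρ v := fun h => hr (Or.inl h)
        have h2 : ¬ redB H π S ρ v := fun h => hr (Or.inr h)
        simp [hc, hv, h1, h2]
      have hunit : ∀ v ∈ S, redV H π S ρ v →
          (c v) % (2*K) = 2 * (φ (π v)).val ∨ (c v) % (2*K) = 2 * (φ (π v)).val + 1 := by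
        intro v hv hr
        have hφlt : (φ (π v)).val < K := (φ (π v)).2
        by_cases h1 : redA H π S ρ v
        · left
          rw [hcA v hv h1, Nat.add_mul_mod_self_left, Nat.mod_eq_of_lt (by omega)]
        · right
          have h2 : redB H π S ρ v := hr.resolve_left h1
          rw [hcB v hv h1 h2, Nat.add_mul_mod_self_left, Nat.mod_eq_of_lt (by omega)]
      refine ⟨c, ?_, ?_⟩
      · -- the bound
        intro v hv
        have hφlt : (φ (π v)).val < K := (φ (π v)).2
        have hpow : (2*K)^(w+1) = 2*K * (2*K)^w := by ring
        have hpos : 1 ≤ (2*K)^w := Nat.one_le_pow _ _ (by omega)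
        by_cases h1 : redA H π S ρ v
        · have hb := hA1 (π v) v (Finset.mem_filter.2 ⟨hv, rfl, h1⟩)
          rw [hcA v hv h1, hpow]
          have : cA (π v) v + 1 ≤ (2*K)^w := hb
          calc 2 * (φ (π v)).val + 2*K * cA (π v) v < 2*K + 2*K * cA (π v) v := by omega
            _ = 2*K * (cA (π v) v + 1) := by ring
            _ ≤ 2*K * (2*K)^w := Nat.mul_le_mul_left _ this
        · by_cases h2 : redB H π S ρ v
          · have hb := hB1 (π v) v (Finset.mem_filter.2 ⟨hv, rfl, h1, h2⟩)
            rw [hcB v hv h1 h2, hpow]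
            have : cB (π v) v + 1 ≤ (2*K)^w := hb
            calc (2 * (φ (π v)).val + 1) + 2*K * cB (π v) v
                < 2*K + 2*K * cB (π v) v := by omega
              _ = 2*K * (cB (π v) v + 1) := by ring
              _ ≤ 2*K * (2*K)^w := Nat.mul_le_mul_left _ this
          · have hnr : ¬ redV H π S ρ v := fun h => (h.elim h1 h2)
            rw [hcF v hv hnr]
            exact hF1 (π v) v (Finset.mem_filter.2 ⟨hv, rfl⟩)
      · -- acyclicity of the classes
        intro i
        apply lemmaP D π ρ
        · -- per fiber
          intro x
          set Cx : Set V := {v | v ∈ {v : V | v ∈ S ∧ c v = i} ∧ π v = x} with hCx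
          rcases Set.eq_empty_or_nonempty Cx with hE | ⟨v₀, hv₀⟩
          · rw [hE]; exact D.acyclicOn_empty
          obtain ⟨⟨hv₀S, hv₀c⟩, hv₀x⟩ := hv₀
          by_cases hred : redV H π S ρ v₀
          · -- the whole fiber is red
            have hallred : ∀ v ∈ S, π v = x → redV H π S ρ v := by
              intro v hv hvx
              exact hgood v₀ hv₀S v hv (by rw [hv₀x, hvx]) hred
            by_cases h1 : redA H π S ρ v₀
            · -- all class members of the fiber are redA with the same cA-value
              refine (hA2 x (cA x v₀)).mono ?_
              rintro v ⟨⟨hvS, hvc⟩, hvx⟩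
              have hvred := hallred v hvS hvx
              have hφlt : (φ x).val < K := (φ x).2
              have hvA : redA H π S ρ v := by
                by_contra hvA
                have hvB := hvred.resolve_left hvA
                have e1 : i % (2*K) = 2 * (φ x).val + 1 := by
                  rw [← hvc, hcB v hvS hvA hvB, hvx, Nat.add_mul_mod_self_left,
                    Nat.mod_eq_of_lt (by omega)]
                have e2 : i % (2*K) = 2 * (φ x).val := by
                  rw [← hv₀c, hcA v₀ hv₀S h1, hv₀x, Nat.add_mul_mod_self_left,
                    Nat.mod_eq_of_lt (by omega)]
                omega
              have heq : c v = c v₀ := hvc.trans hv₀c.symm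
              rw [hcA v hvS hvA, hcA v₀ hv₀S h1, hvx, hv₀x] at heq
              have heq2 : 2*K * cA x v = 2*K * cA x v₀ := by omega
              have : cA x v = cA x v₀ := Nat.eq_of_mul_eq_mul_left (by omega) heq2
              exact ⟨Finset.mem_filter.2 ⟨hvS, hvx, hvA⟩, this⟩
            · have h2 : redB H π S ρ v₀ := hred.resolve_left h1
              refine (hB2 x (cB x v₀)).mono ?_
              rintro v ⟨⟨hvS, hvc⟩, hvx⟩
              have hvred := hallred v hvS hvx
              have hφlt : (φ x).val < K := (φ x).2
              have hvnA : ¬ redA H π S ρ v := by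
                intro hvA
                have e1 : i % (2*K) = 2 * (φ x).val := by
                  rw [← hvc, hcA v hvS hvA, hvx, Nat.add_mul_mod_self_left,
                    Nat.mod_eq_of_lt (by omega)]
                have e2 : i % (2*K) = 2 * (φ x).val + 1 := by
                  rw [← hv₀c, hcB v₀ hv₀S h1 h2, hv₀x, Nat.add_mul_mod_self_left,
                    Nat.mod_eq_of_lt (by omega)]
                omega
              have hvB := (hallred v hvS hvx).resolve_left hvnA
              have heq : c v = c v₀ := hvc.trans hv₀c.symm
              rw [hcB v hvS hvnA hvB, hcB v₀ hv₀S h1 h2, hvx, hv₀x] at heq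
              have heq2 : 2*K * cB x v = 2*K * cB x v₀ := by omega
              have : cB x v = cB x v₀ := Nat.eq_of_mul_eq_mul_left (by omega) heq2
              exact ⟨Finset.mem_filter.2 ⟨hvS, hvx, hvnA, hvB⟩, this⟩
          · -- the whole fiber is sandwiched
            have hallnred : ∀ v ∈ S, π v = x → ¬ redV H π S ρ v := by
              intro v hv hvx hr
              exact hred (hgood v hv v₀ hv₀S (by rw [hv₀x, hvx]) hr)
            refine (hF2 x i).mono ?_
            rintro v ⟨⟨hvS, hvc⟩, hvx⟩
            have hcv := hcF v hvS (hallnred v hvS hvx)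
            rw [hvx] at hcv
            exact ⟨Finset.mem_filter.2 ⟨hvS, hvx⟩, by rw [← hcv]; exact hvc⟩
        · -- cross-fiber condition
          rintro u ⟨huS, huc⟩ v ⟨hvS, hvc⟩ hne hadj u' ⟨hu'S, hu'c⟩ hπu' v' ⟨hv'S, hv'c⟩ hπv'
          have hHadj : H.Adj (π u) (π v) := (hmod u huS v hvS hne).1 hadj
          have hπne' : π u' ≠ π v' := by rw [hπu', hπv']; exact hne
          have hne'' : u' ≠ v' := fun h => hπne' (congrArg π h)
          have hρne : ρ u' ≠ ρ v' := fun h => hne'' (hρ h)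
          by_cases hu'r : redV H π S ρ u'
          · by_cases hv'r : redV H π S ρ v'
            · -- both red: contradiction with the proper colouring of H
              exfalso
              have e1 := hunit u' hu'S hu'r
              have e2 := hunit v' hv'S hv'r
              rw [hu'c] at e1
              rw [hv'c] at e2
              rw [hπu'] at e1
              rw [hπv'] at e2
              have : φ (π u) = φ (π v) := by
                have g1 : (φ (π u)).val = (φ (π v)).val := by
                  rcases e1 with e1 | e1 <;> rcases e2 with e2 | e2 <;> omega
                exact Fin.ext g1
              exact hφ (π u) (π v) (Or.inl hHadj) this
            · -- v' not red, in particular not redA: its in-neighbours are below it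
              have hv'nA : ¬ redA H π S ρ v' := fun h => hv'r (Or.inl h)
              have : ¬ (ρ v' < ρ u') := by
                intro hlt
                exact hv'nA ⟨u', hu'S, by rw [hπv', hπu']; exact hne,
                  by rw [hπv', hπu']; exact hHadj, hlt⟩
              rcases lt_or_gt_of_ne hρne with h | h
              · exact h
              · exact absurd h this
          · -- u' not red, in particular not redB: its out-neighbours are above it
            have hu'nB : ¬ redB H π S ρ u' := fun h => hu'r (Or.inr h)
            have : ¬ (ρ v' < ρ u') := by
              intro hlt
              exact hu'nB ⟨v', hv'S, by rw [hπu', hπv']; exact fun h => hne h.symm,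
                by rw [hπu', hπv']; exact hHadj, hlt⟩
            rcases lt_or_gt_of_ne hρne with h | h
            · exact h
            · exact absurd h this

end MainInduction
section Glue

open Classical

theorem sto_to_rho {V : Type} [Fintype V] (r : V → V → Prop) (h : IsStrictTotalOrder V r) :
    ∃ ρ : V → ℚ, Function.Injective ρ ∧ ∀ u v, r u v ↔ ρ u < ρ v := by
  classical
  have htri : ∀ u v : V, r u v ∨ u = v ∨ r v u := fun u v =>
    by
      by_cases h1 : r u v
      · exact Or.inl h1
      by_cases h2 : r v u
      · exact Or.inr (Or.inr h2)
      exact Or.inr (Or.inl (h.trichotomous u v h1 h2))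
  have htrans : ∀ a b c : V, r a b → r b c → r a c :=
    fun a b c => h.toIsStrictOrder.toIsTrans.trans a b c
  have hirr : ∀ a : V, ¬ r a a := fun a => h.irrefl a
  set ρ : V → ℚ := fun v => ((Finset.univ.filter (fun u => r u v)).card : ℚ) with hρ
  have hmono : ∀ u v, r u v → ρ u < ρ v := by
    intro u v huv
    have hsub : Finset.univ.filter (fun z => r z u) ⊂ Finset.univ.filter (fun z => r z v) := by
      rw [Finset.ssubset_iff_of_subset]
      · exact ⟨u, by simp [huv], by simp [hirr u]⟩
      · intro z hz
        simp only [Finset.mem_filter, Finset.mem_univ, true_and] at hz ⊢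
        exact htrans z u v hz huv
    have := Finset.card_lt_card hsub
    simp only [hρ]
    exact_mod_cast this
  have hiff : ∀ u v, r u v ↔ ρ u < ρ v := by
    intro u v
    refine ⟨hmono u v, fun hlt => ?_⟩
    rcases htri u v with h1 | rfl | h1
    · exact h1
    · exact absurd hlt (lt_irrefl _)
    · exact absurd (hmono v u h1) (not_lt.2 (le_of_lt hlt))
  refine ⟨ρ, ?_, hiff⟩
  intro u v huv
  rcases htri u v with h1 | h1 | h1
  · exact absurd (huv ▸ hmono u v h1) (lt_irrefl _)
  · exact h1
  · exact absurd (huv ▸ hmono v u h1) (lt_irrefl _)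

/-- The set defining `cliqueNum` is nonempty. -/
theorem cliqueNum_set_nonempty (V : Type) [Fintype V] (D : Dig V) :
    {m | ∃ r : V → V → Prop, IsStrictTotalOrder V r ∧ gOmega (D.backedge r) = m}.Nonempty := by
  classical
  set e := (Fintype.equivFin V)
  set r : V → V → Prop := fun a b => e a < e b with hr
  have hsto : IsStrictTotalOrder V r := by
    refine { trichotomous := ?_, irrefl := ?_, trans := ?_ }
    · intro a b h1 h2
      rcases lt_trichotomy (e a) (e b) with h | h | h
      · exact absurd h h1
      · exact e.injective h
      · exact absurd h h2
    · intro a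
      exact lt_irrefl _
    · intro a b c
      exact lt_trans
  exact ⟨gOmega (D.backedge r), r, hsto, rfl⟩

theorem stmt_8_aux (𝒯 : ∀ V : Type, Dig V → Prop) (K : ℕ)
    (hK : ∀ (V : Type) [Fintype V] (D : Dig V), 𝒯 V D → gChi D.underlying ≤ K) :
    ∀ (V : Type) [Fintype V] (D : Dig V), SubstClosureD 𝒯 V D →
      D.dichi ≤ (3 * K) ^ D.cliqueNum := by
  intro V _ D hD
  classical
  rcases isEmpty_or_nonempty V with hVE | hVne
  · -- empty vertex set: dichromatic number is 0
    have h0 : (0 : ℕ) ∈ {n | ∃ c : V → Fin n, ∀ i, D.AcyclicOn {v | c v = i}} := by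
      refine ⟨fun v => (hVE.false v).elim, fun i => ?_⟩
      exact D.acyclicOn_subsingleton (fun a _ => (hVE.false a).elim)
    calc D.dichi ≤ 0 := Nat.sInf_le h0
      _ ≤ _ := Nat.zero_le _
  · -- nonempty vertex set
    have hK1 : 1 ≤ K := K_pos 𝒯 K hK V D hD inferInstance hVne
    set w : ℕ := D.cliqueNum with hw
    -- get an order witnessing the clique number
    have hmem : w ∈ {m | ∃ r : V → V → Prop,
        IsStrictTotalOrder V r ∧ gOmega (D.backedge r) = m} :=
      Nat.sInf_mem (cliqueNum_set_nonempty V D)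
    obtain ⟨r, hr, hrω⟩ := hmem
    obtain ⟨ρ, hρ, hriff⟩ := sto_to_rho r hr
    -- translate to a clique bound
    have hcb : CliqueBound D w ρ Finset.univ := by
      intro t _ hcl
      have hclique : (D.backedge r).IsNClique t.card t := by
        rw [SimpleGraph.isNClique_iff]
        refine ⟨?_, rfl⟩
        intro u hu v hv huv
        have := hcl u (by exact_mod_cast hu) v (by exact_mod_cast hv) huv
        rcases this with ⟨h1, h2⟩ | ⟨h1, h2⟩
        · exact Or.inl ⟨(hriff u v).2 h1, h2⟩
        · exact Or.inr ⟨(hriff v u).2 h1, h2⟩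
      have hbdd : BddAbove {n | ∃ s : Finset V, (D.backedge r).IsNClique n s} := by
        refine ⟨Fintype.card V, fun n hn => ?_⟩
        obtain ⟨s, hs⟩ := hn
        rw [SimpleGraph.isNClique_iff] at hs
        rw [← hs.2]
        exact Finset.card_le_card (Finset.subset_univ s) |>.trans (by simp)
      have : t.card ≤ gOmega (D.backedge r) := le_csSup hbdd ⟨t, hclique⟩
      rw [hrω] at this
      exact this
    -- apply the main theorem
    obtain ⟨c, hc1, hc2⟩ :=
      mainT 𝒯 K hK V D hD w (Finset.univ.card) Finset.univ ρ hρ le_rfl hcb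
    have hN : 0 < (2*K)^w := pow_pos (by omega) _
    set c' : V → Fin ((2*K)^w) := fun v => ⟨c v, hc1 v (Finset.mem_univ v)⟩ with hc'
    have hmem2 : (2*K)^w ∈ {n | ∃ c : V → Fin n, ∀ i, D.AcyclicOn {v | c v = i}} := by
      refine ⟨c', fun i => ?_⟩
      have := hc2 i.val
      refine this.mono ?_
      intro v hv
      refine ⟨Finset.mem_univ v, ?_⟩
      exact congrArg Fin.val hv
    calc D.dichi ≤ (2*K)^w := Nat.sInf_le hmem2
      _ ≤ (3*K)^w := Nat.pow_le_pow_left (by omega) _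

end Glue
/-- If every digraph of a class `𝒯` has underlying graph with chromatic number at most `K`,
then the closure of `𝒯` under substitution is χ⃗-bounded by `w ↦ (3K)^w`. -/
theorem stmt_8 (𝒯 : ∀ V : Type, Dig V → Prop) (K : ℕ)
    (hK : ∀ (V : Type) [Fintype V] (D : Dig V), 𝒯 V D → gChi D.underlying ≤ K) :
    ∀ (V : Type) [Fintype V] (D : Dig V), SubstClosureD 𝒯 V D →
      D.dichi ≤ (3 * K) ^ D.cliqueNum := by
  exact stmt_8_aux 𝒯 K hK
end

section
/- If a tournament T admits a total ordering of its vertices whose backedge graph is a forest, then T admits a total ordering of its vertices whose backedge graph is a tree (i.e., a connected forest). -/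
variable {V : Type*}

private lemma aux_sup_edge_isAcyclic {W : Type} {G : SimpleGraph W} {a b : W}
    (hG : G.IsAcyclic) (hr : ¬ G.Reachable a b) (hab : a ≠ b) :
    (G ⊔ SimpleGraph.edge a b).IsAcyclic := by
  intro v c hc
  by_cases he : s(a, b) ∈ c.edges
  · have h2 := (SimpleGraph.adj_and_reachable_delete_edges_iff_exists_cycle.mpr ⟨v, c, hc, he⟩).2
    apply hr
    refine h2.mono ?_
    intro u w huw
    rw [SimpleGraph.deleteEdges, SimpleGraph.sdiff_adj, SimpleGraph.fromEdgeSet_adj] at huw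
    obtain ⟨h1, h2'⟩ := huw
    rcases h1 with h1 | h1
    · exact h1
    · rw [SimpleGraph.edge_adj] at h1
      exfalso
      apply h2'
      refine ⟨?_, h1.2⟩
      rcases h1.1 with ⟨rfl, rfl⟩ | ⟨rfl, rfl⟩
      · rfl
      · exact Sym2.eq_swap
  · have hq : ∀ e ∈ c.edges, e ∈ G.edgeSet := by
      intro e hec
      have h3 := c.edges_subset_edgeSet hec
      rw [SimpleGraph.edgeSet_sup, SimpleGraph.edge_edgeSet_of_ne hab] at h3
      rcases h3 with h3 | h3
      · exact h3
      · rw [Set.mem_singleton_iff] at h3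
        subst h3
        exact absurd hec he
    exact hG (c.transfer G hq) (hc.transfer hq)

private lemma aux_swap_lt {n : ℕ} {p q : Fin n} (hpq : (p : ℕ) + 1 = (q : ℕ)) (x y : Fin n) :
    Equiv.swap p q x < Equiv.swap p q y ↔
      (x < y ∧ ¬(x = p ∧ y = q)) ∨ (x = q ∧ y = p) := by
  have hne : p ≠ q := by
    intro h; rw [h] at hpq; omega
  rw [Equiv.swap_apply_def, Equiv.swap_apply_def]
  split_ifs <;> simp only [Fin.lt_def, Fin.ext_iff] at * <;> omega

private def tB {W : Type} {n : ℕ} (T : Tournament W) (f : W ≃ Fin n) : SimpleGraph W :=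
  T.toDig.backedge (fun u v => f u < f v)

private lemma tB_adj {W : Type} {n : ℕ} (T : Tournament W) (f : W ≃ Fin n) (u v : W) :
    (tB T f).Adj u v ↔ (f u < f v ∧ T.Adj v u) ∨ (f v < f u ∧ T.Adj u v) := Iff.rfl

private lemma aux_sto {W : Type} {n : ℕ} (f : W ≃ Fin n) :
    IsStrictTotalOrder W (fun u v => f u < f v) := by
  haveI h1 : IsTrichotomous W (fun u v => f u < f v) := by
    constructor
    intro a b h1' h2'
    rcases lt_trichotomy (f a) (f b) with h | h | h
    · exact absurd h h1'
    · exact f.injective h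
    · exact absurd h h2'
  haveI h2 : IsIrrefl W (fun u v => f u < f v) := ⟨fun _ => lt_irrefl _⟩
  haveI h3 : IsTrans W (fun u v => f u < f v) :=
    ⟨fun _ _ _ hxy hyz => hxy.trans hyz⟩
  exact { toTrichotomous := h1, toIsStrictOrder := { toIrrefl := h2, toIsTrans := h3 } }

/-- If a tournament has an ordering whose backedge graph is a forest, then it has an
ordering whose backedge graph is a tree. -/
theorem stmt_11 (V : Type) [Fintype V] [Nonempty V] (T : Tournament V)
    (h : ∃ r : V → V → Prop, IsStrictTotalOrder V r ∧ (T.toDig.backedge r).IsAcyclic) :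
    ∃ r : V → V → Prop, IsStrictTotalOrder V r ∧ (T.toDig.backedge r).IsTree := by
  classical
  obtain ⟨r0, hsto0, hac0⟩ := h
  set n := Fintype.card V with hn
  -- translate the given order into an equiv
  letI := hsto0
  letI : DecidableRel r0 := fun a b => Classical.dec _
  letI lo : LinearOrder V := linearOrderOfSTO r0
  let e : Fin n ≃o V := Fintype.orderIsoFinOfCardEq V hn.symm
  let f0 : V ≃ Fin n := e.symm.toEquiv
  have hf0 : tB T f0 = T.toDig.backedge r0 := by
    have key : ∀ u v : V, (f0 u < f0 v) ↔ r0 u v := fun u v => e.symm.lt_iff_lt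
    ext u v
    rw [tB_adj]
    show _ ↔ ((r0 u v ∧ T.toDig.Adj v u) ∨ (r0 v u ∧ T.toDig.Adj u v))
    rw [key u v, key v u]
  -- pick an acyclic ordering with the maximum number of backedges
  let S : Finset (V ≃ Fin n) := Finset.univ.filter (fun f => (tB T f).IsAcyclic)
  have hS0 : f0 ∈ S := by
    simp only [S, Finset.mem_filter, Finset.mem_univ, true_and, hf0]
    exact hac0
  obtain ⟨f, hfS, hmax⟩ := S.exists_max_image (fun f => (tB T f).edgeSet.ncard) ⟨f0, hS0⟩
  have hfac : (tB T f).IsAcyclic := by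
    simpa only [S, Finset.mem_filter, Finset.mem_univ, true_and] using hfS
  -- consecutive vertices are reachable
  have step : ∀ i : ℕ, ∀ h1 : i + 1 < n, ∀ h0 : i < n,
      (tB T f).Reachable (f.symm ⟨i, h0⟩) (f.symm ⟨i + 1, h1⟩) := by
    intro i h1 h0
    by_contra hr
    set p : Fin n := ⟨i, h0⟩ with hp
    set q : Fin n := ⟨i + 1, h1⟩ with hqdef
    have hpq : (p : ℕ) + 1 = (q : ℕ) := rfl
    set a := f.symm p with ha
    set b := f.symm q with hb
    have hab : a ≠ b := by
      intro hcon
      have := f.symm.injective hcon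
      rw [Fin.ext_iff] at this
      simp [hp, hqdef] at this
    have hfa : f a = p := f.apply_symm_apply p
    have hfb : f b = q := f.apply_symm_apply q
    have hplt : p < q := by simp [hp, hqdef, Fin.lt_def]
    have hnadj : ¬ (tB T f).Adj a b := fun hadj => hr hadj.reachable
    have hTab : T.Adj a b := by
      rcases T.total a b hab with hT | hT
      · exact hT
      · exact absurd ((tB_adj T f a b).mpr
          (Or.inl ⟨by show f a < f b; rw [hfa, hfb]; exact hplt, hT⟩)) hnadj
    have hnTba : ¬ T.Adj b a := T.asymm a b hTab
    have hBg : tB T (f.trans (Equiv.swap p q)) = tB T f ⊔ SimpleGraph.edge a b := by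
      ext u v
      rw [SimpleGraph.sup_adj, SimpleGraph.edge_adj, tB_adj, tB_adj]
      simp only [Equiv.trans_apply]
      have hup : (f u = p) ↔ u = a := ⟨fun hh => f.injective (hh.trans hfa.symm), fun hh => hh ▸ hfa⟩
      have huq : (f u = q) ↔ u = b := ⟨fun hh => f.injective (hh.trans hfb.symm), fun hh => hh ▸ hfb⟩
      have hvp : (f v = p) ↔ v = a := ⟨fun hh => f.injective (hh.trans hfa.symm), fun hh => hh ▸ hfa⟩
      have hvq : (f v = q) ↔ v = b := ⟨fun hh => f.injective (hh.trans hfb.symm), fun hh => hh ▸ hfb⟩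
      rw [aux_swap_lt hpq (f u) (f v), aux_swap_lt hpq (f v) (f u), hup, huq, hvp, hvq]
      by_cases hc1 : u = a ∧ v = b
      · obtain ⟨rfl, rfl⟩ := hc1
        constructor
        · intro _; exact Or.inr ⟨Or.inl ⟨rfl, rfl⟩, hab⟩
        · intro _; exact Or.inr ⟨Or.inr ⟨rfl, rfl⟩, hTab⟩
      · by_cases hc2 : u = b ∧ v = a
        · obtain ⟨rfl, rfl⟩ := hc2
          constructor
          · intro _; exact Or.inr ⟨Or.inr ⟨rfl, rfl⟩, fun hcon => hab hcon.symm⟩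
          · intro _; exact Or.inl ⟨Or.inr ⟨rfl, rfl⟩, hTab⟩
        · have e3 : ¬(v = a ∧ u = b) := fun hcon => hc2 ⟨hcon.2, hcon.1⟩
          have e4 : ¬(v = b ∧ u = a) := fun hcon => hc1 ⟨hcon.2, hcon.1⟩
          simp only [eq_false hc1, eq_false hc2, eq_false e3, eq_false e4,
            not_false_eq_true, and_true, false_and, and_false, or_false, false_or]
    have hgac : (tB T (f.trans (Equiv.swap p q))).IsAcyclic := by
      rw [hBg]; exact aux_sup_edge_isAcyclic hfac hr hab
    have hgS : f.trans (Equiv.swap p q) ∈ S := by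
      simp only [S, Finset.mem_filter, Finset.mem_univ, true_and]
      exact hgac
    have hcount : (tB T (f.trans (Equiv.swap p q))).edgeSet.ncard = (tB T f).edgeSet.ncard + 1 := by
      rw [hBg, SimpleGraph.edgeSet_sup, SimpleGraph.edge_edgeSet_of_ne hab, Set.union_singleton,
        Set.ncard_insert_of_notMem (by rwa [SimpleGraph.mem_edgeSet]) (Set.toFinite _)]
    have := hmax _ hgS
    simp only [hcount] at this
    omega
  have hpos : 0 < n := Fintype.card_pos
  have chain : ∀ k : ℕ, ∀ hk : k < n, (tB T f).Reachable (f.symm ⟨0, hpos⟩) (f.symm ⟨k, hk⟩) := by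
    intro k
    induction k with
    | zero => intro hk; exact SimpleGraph.Reachable.refl _
    | succ k ih =>
      intro hk
      exact (ih (by omega)).trans (step k hk (by omega))
  have hconn : (tB T f).Connected := by
    rw [SimpleGraph.connected_iff]
    refine ⟨fun u v => ?_, inferInstance⟩
    have hu := chain (f u) (f u).isLt
    have hv := chain (f v) (f v).isLt
    rw [Fin.eta, Equiv.symm_apply_apply] at hu hv
    exact hu.symm.trans hv
  exact ⟨fun u v => f u < f v, aux_sto f, ⟨hconn, hfac⟩⟩
end
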